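/- arXiv:2504.04554 — 10 statements merged into one kernel-verified Lean document; each statement's English description precedes it below -/
import Mathlib

section
/- (Forward error bound for the approximate Sherman–Morrison–Woodbury formula.) Let A be an invertible n×n real matrix, let U, V be n×k real matrices, set λ = ‖U‖·‖V‖ and B = A + UVᵀ, and assume B is invertible. Assume the capacitance matrix I + Vᵀ A⁻¹ U is invertible with ‖(I + Vᵀ A⁻¹ U)⁻¹‖ ≤ α. Let X be an n×n matrix (an approximation of A⁻¹) with ‖X − A⁻¹‖ ≤ ε₁ where ε₁ < 1/(2λα); assume I + Vᵀ X U is invertible; and let Z be a k×k matrix with ‖Z − (I + Vᵀ X U)⁻¹‖ ≤ ε₂. Then ‖B⁻¹ − (X − X U Z Vᵀ X)‖ ≤ ε₁ + ε₁ λ α (2‖A⁻¹‖ + ε₁) + λ(‖A⁻¹‖ + ε₁)² (ε₂ + 2 ε₁ λ α²). -/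
open Matrix
open scoped Matrix.Norms.L2Operator

private lemma l2n3 {a b c d : ℕ} (P : Matrix (Fin a) (Fin b) ℝ) (Q : Matrix (Fin b) (Fin c) ℝ)
    (R : Matrix (Fin c) (Fin d) ℝ) : ‖P * Q * R‖ ≤ ‖P‖ * ‖Q‖ * ‖R‖ :=
  calc ‖P * Q * R‖ ≤ ‖P * Q‖ * ‖R‖ := Matrix.l2_opNorm_mul _ _
    _ ≤ ‖P‖ * ‖Q‖ * ‖R‖ :=
        mul_le_mul_of_nonneg_right (Matrix.l2_opNorm_mul P Q) (norm_nonneg R)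

private lemma l2n5 {a b c d e f : ℕ} (P : Matrix (Fin a) (Fin b) ℝ) (Q : Matrix (Fin b) (Fin c) ℝ)
    (R : Matrix (Fin c) (Fin d) ℝ) (S : Matrix (Fin d) (Fin e) ℝ) (T : Matrix (Fin e) (Fin f) ℝ) :
    ‖P * Q * R * S * T‖ ≤ ‖P‖ * ‖Q‖ * ‖R‖ * ‖S‖ * ‖T‖ :=
  calc ‖P * Q * R * S * T‖ ≤ ‖P * Q * R‖ * ‖S‖ * ‖T‖ := l2n3 _ _ _
    _ ≤ ‖P‖ * ‖Q‖ * ‖R‖ * ‖S‖ * ‖T‖ :=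
        mul_le_mul_of_nonneg_right
          (mul_le_mul_of_nonneg_right (l2n3 P Q R) (norm_nonneg S)) (norm_nonneg T)

private lemma mul3_le {x y z x' y' z' : ℝ} (hx : x ≤ x') (hy : y ≤ y') (hz : z ≤ z')
    (y0 : 0 ≤ y) (z0 : 0 ≤ z) (x'0 : 0 ≤ x') (y'0 : 0 ≤ y') : x * y * z ≤ x' * y' * z' :=
  mul_le_mul (mul_le_mul hx hy y0 x'0) hz z0 (mul_nonneg x'0 y'0)

private lemma mul5_le {x y z s t x' y' z' s' t' : ℝ} (hx : x ≤ x') (hy : y ≤ y')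
    (hz : z ≤ z') (hs : s ≤ s') (ht : t ≤ t') (y0 : 0 ≤ y) (z0 : 0 ≤ z) (s0 : 0 ≤ s)
    (t0 : 0 ≤ t) (x'0 : 0 ≤ x') (y'0 : 0 ≤ y') (z'0 : 0 ≤ z') (s'0 : 0 ≤ s') :
    x * y * z * s * t ≤ x' * y' * z' * s' * t' := by
  have h3 : x * y * z ≤ x' * y' * z' := mul3_le hx hy hz y0 z0 x'0 y'0
  have h4 : x * y * z * s ≤ x' * y' * z' * s' :=
    mul_le_mul h3 hs s0 (by positivity)
  exact mul_le_mul h4 ht t0 (by positivity)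

/-- Forward error bound for the approximate Sherman–Morrison–Woodbury formula. -/
theorem smw_forward_error {n k : ℕ} (A : Matrix (Fin n) (Fin n) ℝ) (hA : IsUnit A)
    (U V : Matrix (Fin n) (Fin k) ℝ) (lam : ℝ) (hlam : lam = ‖U‖ * ‖V‖)
    (B : Matrix (Fin n) (Fin n) ℝ) (hB : B = A + U * Vᵀ) (hBinv : IsUnit B)
    (α : ℝ) (hcap : IsUnit ((1 : Matrix (Fin k) (Fin k) ℝ) + Vᵀ * A⁻¹ * U))
    (hα : ‖((1 : Matrix (Fin k) (Fin k) ℝ) + Vᵀ * A⁻¹ * U)⁻¹‖ ≤ α)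
    (X : Matrix (Fin n) (Fin n) ℝ) (ε₁ ε₂ : ℝ)
    (hX : ‖X - A⁻¹‖ ≤ ε₁) (hε₁ : ε₁ < 1 / (2 * lam * α))
    (hcapX : IsUnit ((1 : Matrix (Fin k) (Fin k) ℝ) + Vᵀ * X * U))
    (Z : Matrix (Fin k) (Fin k) ℝ)
    (hZ : ‖Z - ((1 : Matrix (Fin k) (Fin k) ℝ) + Vᵀ * X * U)⁻¹‖ ≤ ε₂) :
    ‖B⁻¹ - (X - X * U * Z * Vᵀ * X)‖ ≤
      ε₁ + ε₁ * lam * α * (2 * ‖A⁻¹‖ + ε₁) +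
        lam * (‖A⁻¹‖ + ε₁) ^ 2 * (ε₂ + 2 * ε₁ * lam * α ^ 2) := by
  set C : Matrix (Fin k) (Fin k) ℝ := (1 : Matrix (Fin k) (Fin k) ℝ) + Vᵀ * A⁻¹ * U with hC
  set D : Matrix (Fin k) (Fin k) ℝ := (1 : Matrix (Fin k) (Fin k) ℝ) + Vᵀ * X * U with hD
  -- basic positivity facts
  have hε₁0 : 0 ≤ ε₁ := le_trans (norm_nonneg _) hX
  have hε₂0 : 0 ≤ ε₂ := le_trans (norm_nonneg _) hZ
  have hα0 : 0 ≤ α := le_trans (norm_nonneg _) hα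
  have hu0 : 0 ≤ ‖U‖ := norm_nonneg _
  have hv0 : 0 ≤ ‖V‖ := norm_nonneg _
  have hlam0 : 0 ≤ lam := by rw [hlam]; positivity
  have ha0 : 0 ≤ ‖A⁻¹‖ := norm_nonneg _
  have hpos : 0 < 2 * lam * α := by
    by_contra h
    push_neg at h
    have : 1 / (2 * lam * α) ≤ 0 := one_div_nonpos.mpr h
    linarith
  have hsmall : ε₁ * (2 * lam * α) < 1 := (lt_div_iff₀ hpos).mp hε₁
  have hle0 : 0 ≤ lam * ε₁ := mul_nonneg hlam0 hε₁0
  have hw0 : 0 ≤ 2 * ε₁ * lam * α ^ 2 := by positivity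
  -- norm of transpose
  have hVT : ‖Vᵀ‖ = ‖V‖ := by
    rw [← Matrix.conjTranspose_eq_transpose_of_trivial]
    exact Matrix.l2_opNorm_conjTranspose V
  -- Woodbury identity
  have hACunit : IsUnit ((1 : Matrix (Fin k) (Fin k) ℝ)⁻¹ + Vᵀ * A⁻¹ * U) := by
    rwa [inv_one]
  have hSMW : B⁻¹ = A⁻¹ - A⁻¹ * U * C⁻¹ * Vᵀ * A⁻¹ := by
    have h := Matrix.add_mul_mul_inv_eq_sub A U 1 Vᵀ hA isUnit_one hACunit
    rw [Matrix.mul_one, inv_one] at h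
    rw [hB, h, hC]
  -- invertibility as determinants
  have hCdet : IsUnit C.det := (Matrix.isUnit_iff_isUnit_det _).mp hcap
  have hDdet : IsUnit D.det := (Matrix.isUnit_iff_isUnit_det _).mp hcapX
  have hT1 : ‖A⁻¹ - X‖ ≤ ε₁ := by rwa [norm_sub_rev]
  -- difference of capacitance matrices
  have hCD : C - D = Vᵀ * (A⁻¹ - X) * U := by
    rw [hC, hD]
    simp only [Matrix.mul_sub, Matrix.sub_mul]
    abel
  have hCDnorm : ‖C - D‖ ≤ lam * ε₁ := by
    rw [hCD]
    calc ‖Vᵀ * (A⁻¹ - X) * U‖ ≤ ‖Vᵀ‖ * ‖A⁻¹ - X‖ * ‖U‖ := l2n3 _ _ _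
      _ ≤ ‖V‖ * ε₁ * ‖U‖ := by
          rw [hVT]
          exact mul3_le le_rfl hT1 le_rfl (norm_nonneg _) hu0 hv0 hε₁0
      _ = lam * ε₁ := by rw [hlam]; ring
  have hdiffinv : D⁻¹ - C⁻¹ = D⁻¹ * (C - D) * C⁻¹ := by
    have h1 : C * C⁻¹ = 1 := Matrix.mul_nonsing_inv C hCdet
    have h2 : D⁻¹ * D = 1 := Matrix.nonsing_inv_mul D hDdet
    calc D⁻¹ - C⁻¹ = D⁻¹ * (C * C⁻¹) - (D⁻¹ * D) * C⁻¹ := by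
          rw [h1, h2, Matrix.mul_one, Matrix.one_mul]
      _ = D⁻¹ * (C - D) * C⁻¹ := by
          simp only [Matrix.mul_sub, Matrix.sub_mul, Matrix.mul_assoc]
  -- bound on ‖D⁻¹‖
  have hDnorm : ‖D⁻¹‖ ≤ 2 * α := by
    have h1 : ‖D⁻¹‖ ≤ ‖C⁻¹‖ + ‖D⁻¹ - C⁻¹‖ := by
      calc ‖D⁻¹‖ = ‖C⁻¹ + (D⁻¹ - C⁻¹)‖ := by congr 1; abel
        _ ≤ ‖C⁻¹‖ + ‖D⁻¹ - C⁻¹‖ := norm_add_le _ _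
    have h2 : ‖D⁻¹ - C⁻¹‖ ≤ ‖D⁻¹‖ * (lam * ε₁) * α := by
      rw [hdiffinv]
      calc ‖D⁻¹ * (C - D) * C⁻¹‖ ≤ ‖D⁻¹‖ * ‖C - D‖ * ‖C⁻¹‖ := l2n3 _ _ _
        _ ≤ ‖D⁻¹‖ * (lam * ε₁) * α :=
            mul3_le le_rfl hCDnorm hα (norm_nonneg _) (norm_nonneg _) (norm_nonneg _) hle0
    nlinarith [norm_nonneg (D⁻¹), mul_le_mul_of_nonneg_left hsmall.le (norm_nonneg (D⁻¹)), hα]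
  have hdiffnorm : ‖D⁻¹ - C⁻¹‖ ≤ 2 * ε₁ * lam * α ^ 2 := by
    rw [hdiffinv]
    calc ‖D⁻¹ * (C - D) * C⁻¹‖ ≤ ‖D⁻¹‖ * ‖C - D‖ * ‖C⁻¹‖ := l2n3 _ _ _
      _ ≤ (2 * α) * (lam * ε₁) * α :=
          mul3_le hDnorm hCDnorm hα (norm_nonneg _) (norm_nonneg _) (by linarith) hle0
      _ = 2 * ε₁ * lam * α ^ 2 := by ring
  -- bound on ‖Z - C⁻¹‖
  have hZC : ‖Z - C⁻¹‖ ≤ ε₂ + 2 * ε₁ * lam * α ^ 2 := by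
    calc ‖Z - C⁻¹‖ = ‖(Z - D⁻¹) + (D⁻¹ - C⁻¹)‖ := by congr 1; abel
      _ ≤ ‖Z - D⁻¹‖ + ‖D⁻¹ - C⁻¹‖ := norm_add_le _ _
      _ ≤ ε₂ + 2 * ε₁ * lam * α ^ 2 := add_le_add hZ hdiffnorm
  -- bound on ‖X‖
  have hXnorm : ‖X‖ ≤ ‖A⁻¹‖ + ε₁ := by
    calc ‖X‖ = ‖A⁻¹ + (X - A⁻¹)‖ := by congr 1; abel
      _ ≤ ‖A⁻¹‖ + ‖X - A⁻¹‖ := norm_add_le _ _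
      _ ≤ ‖A⁻¹‖ + ε₁ := by linarith
  -- main decomposition
  have hdecomp : B⁻¹ - (X - X * U * Z * Vᵀ * X) =
      (A⁻¹ - X) - ((A⁻¹ - X) * U * C⁻¹ * Vᵀ * A⁻¹ + X * U * C⁻¹ * Vᵀ * (A⁻¹ - X)
        + X * U * (C⁻¹ - Z) * Vᵀ * X) := by
    rw [hSMW]
    simp only [Matrix.sub_mul, Matrix.mul_sub]
    abel
  rw [hdecomp]
  have hT2 : ‖(A⁻¹ - X) * U * C⁻¹ * Vᵀ * A⁻¹‖ ≤ ε₁ * ‖U‖ * α * ‖V‖ * ‖A⁻¹‖ := by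
    calc ‖(A⁻¹ - X) * U * C⁻¹ * Vᵀ * A⁻¹‖
        ≤ ‖A⁻¹ - X‖ * ‖U‖ * ‖C⁻¹‖ * ‖Vᵀ‖ * ‖A⁻¹‖ := l2n5 _ _ _ _ _
      _ ≤ ε₁ * ‖U‖ * α * ‖V‖ * ‖A⁻¹‖ := by
          rw [hVT]
          exact mul5_le hT1 le_rfl hα le_rfl le_rfl hu0 (norm_nonneg _) hv0 ha0
            hε₁0 hu0 hα0 hv0
  have hT3 : ‖X * U * C⁻¹ * Vᵀ * (A⁻¹ - X)‖ ≤ (‖A⁻¹‖ + ε₁) * ‖U‖ * α * ‖V‖ * ε₁ := by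
    calc ‖X * U * C⁻¹ * Vᵀ * (A⁻¹ - X)‖
        ≤ ‖X‖ * ‖U‖ * ‖C⁻¹‖ * ‖Vᵀ‖ * ‖A⁻¹ - X‖ := l2n5 _ _ _ _ _
      _ ≤ (‖A⁻¹‖ + ε₁) * ‖U‖ * α * ‖V‖ * ε₁ := by
          rw [hVT]
          exact mul5_le hXnorm le_rfl hα le_rfl hT1 hu0 (norm_nonneg _) hv0 (norm_nonneg _)
            (by linarith) hu0 hα0 hv0
  have hT4 : ‖X * U * (C⁻¹ - Z) * Vᵀ * X‖ ≤
      (‖A⁻¹‖ + ε₁) * ‖U‖ * (ε₂ + 2 * ε₁ * lam * α ^ 2) * ‖V‖ * (‖A⁻¹‖ + ε₁) := by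
    have hCZ : ‖C⁻¹ - Z‖ ≤ ε₂ + 2 * ε₁ * lam * α ^ 2 := by rwa [norm_sub_rev]
    calc ‖X * U * (C⁻¹ - Z) * Vᵀ * X‖
        ≤ ‖X‖ * ‖U‖ * ‖C⁻¹ - Z‖ * ‖Vᵀ‖ * ‖X‖ := l2n5 _ _ _ _ _
      _ ≤ (‖A⁻¹‖ + ε₁) * ‖U‖ * (ε₂ + 2 * ε₁ * lam * α ^ 2) * ‖V‖ * (‖A⁻¹‖ + ε₁) := by
          rw [hVT]
          exact mul5_le hXnorm le_rfl hCZ le_rfl hXnorm hu0 (norm_nonneg _) hv0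
            (norm_nonneg _) (by linarith) hu0 (by linarith) hv0
  calc ‖(A⁻¹ - X) - ((A⁻¹ - X) * U * C⁻¹ * Vᵀ * A⁻¹ + X * U * C⁻¹ * Vᵀ * (A⁻¹ - X)
        + X * U * (C⁻¹ - Z) * Vᵀ * X)‖
      ≤ ‖A⁻¹ - X‖ + ‖(A⁻¹ - X) * U * C⁻¹ * Vᵀ * A⁻¹ + X * U * C⁻¹ * Vᵀ * (A⁻¹ - X)
        + X * U * (C⁻¹ - Z) * Vᵀ * X‖ := norm_sub_le _ _
    _ ≤ ‖A⁻¹ - X‖ + (‖(A⁻¹ - X) * U * C⁻¹ * Vᵀ * A⁻¹‖ + ‖X * U * C⁻¹ * Vᵀ * (A⁻¹ - X)‖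
        + ‖X * U * (C⁻¹ - Z) * Vᵀ * X‖) := by
        have h := norm_add₃_le (a := (A⁻¹ - X) * U * C⁻¹ * Vᵀ * A⁻¹)
          (b := X * U * C⁻¹ * Vᵀ * (A⁻¹ - X)) (c := X * U * (C⁻¹ - Z) * Vᵀ * X)
        linarith
    _ ≤ ε₁ + (ε₁ * ‖U‖ * α * ‖V‖ * ‖A⁻¹‖ + (‖A⁻¹‖ + ε₁) * ‖U‖ * α * ‖V‖ * ε₁
        + (‖A⁻¹‖ + ε₁) * ‖U‖ * (ε₂ + 2 * ε₁ * lam * α ^ 2) * ‖V‖ * (‖A⁻¹‖ + ε₁)) := by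
        linarith
    _ = ε₁ + ε₁ * lam * α * (2 * ‖A⁻¹‖ + ε₁) +
        lam * (‖A⁻¹‖ + ε₁) ^ 2 * (ε₂ + 2 * ε₁ * lam * α ^ 2) := by rw [hlam]; ring
end

section
/- (Forward error bound, small-update case.) Let A be an invertible n×n real matrix, let U, V be n×k real matrices, set λ = ‖U‖·‖V‖ and B = A + UVᵀ, and assume B is invertible. Assume λ ≤ (1/2)·σ_min(A), that the capacitance matrix I + Vᵀ A⁻¹ U is invertible, and that σ_min(A) ≤ 1 (equivalently ‖A⁻¹‖ ≥ 1). Let X be an n×n matrix with ‖X − A⁻¹‖ ≤ ε₁ ≤ 1 and ε₁ < 1/(2 λ ‖(I + Vᵀ A⁻¹ U)⁻¹‖); assume I + Vᵀ X U is invertible; and let Z be a k×k matrix with ‖Z − (I + Vᵀ X U)⁻¹‖ ≤ ε₂ ≤ 1. Then ‖B⁻¹ − (X − X U Z Vᵀ X)‖ ≤ 2 ε₂ ‖A⁻¹‖ + 12 ε₁. -/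
open Matrix
open scoped Matrix.Norms.L2Operator

set_option maxHeartbeats 1000000

private lemma smw_norm_one_le (k : ℕ) : ‖(1 : Matrix (Fin k) (Fin k) ℝ)‖ ≤ 1 := by
  rw [Matrix.cstar_norm_def, _root_.map_one]
  exact ContinuousLinearMap.norm_id_le

private lemma smw_norm_transpose {n k : ℕ} (V : Matrix (Fin n) (Fin k) ℝ) : ‖Vᵀ‖ = ‖V‖ := by
  rw [← Matrix.conjTranspose_eq_transpose_of_trivial, Matrix.l2_opNorm_conjTranspose]

private lemma smw_mul3 {k : ℕ} (P Q R : Matrix (Fin k) (Fin k) ℝ) :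
    ‖P * Q * R‖ ≤ ‖P‖ * ‖Q‖ * ‖R‖ := by
  calc ‖P * Q * R‖ ≤ ‖P * Q‖ * ‖R‖ := Matrix.l2_opNorm_mul _ _
    _ ≤ ‖P‖ * ‖Q‖ * ‖R‖ :=
      mul_le_mul_of_nonneg_right (Matrix.l2_opNorm_mul _ _) (norm_nonneg _)

private lemma smw_sandwich {n k : ℕ} (M : Matrix (Fin n) (Fin n) ℝ)
    (U V : Matrix (Fin n) (Fin k) ℝ) : ‖Vᵀ * M * U‖ ≤ ‖V‖ * ‖M‖ * ‖U‖ := by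
  calc ‖Vᵀ * M * U‖ ≤ ‖Vᵀ * M‖ * ‖U‖ := Matrix.l2_opNorm_mul _ _
    _ ≤ ‖Vᵀ‖ * ‖M‖ * ‖U‖ :=
      mul_le_mul_of_nonneg_right (Matrix.l2_opNorm_mul _ _) (norm_nonneg _)
    _ = ‖V‖ * ‖M‖ * ‖U‖ := by rw [smw_norm_transpose]

private lemma smw_mul5 {n k : ℕ} (M N : Matrix (Fin n) (Fin n) ℝ)
    (U V : Matrix (Fin n) (Fin k) ℝ) (W : Matrix (Fin k) (Fin k) ℝ) :
    ‖M * U * W * Vᵀ * N‖ ≤ ‖M‖ * ‖U‖ * ‖W‖ * ‖V‖ * ‖N‖ := by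
  calc ‖M * U * W * Vᵀ * N‖ ≤ ‖M * U * W * Vᵀ‖ * ‖N‖ := Matrix.l2_opNorm_mul _ _
    _ ≤ ‖M * U * W‖ * ‖Vᵀ‖ * ‖N‖ :=
      mul_le_mul_of_nonneg_right (Matrix.l2_opNorm_mul _ _) (norm_nonneg _)
    _ ≤ ‖M * U‖ * ‖W‖ * ‖Vᵀ‖ * ‖N‖ :=
      mul_le_mul_of_nonneg_right
        (mul_le_mul_of_nonneg_right (Matrix.l2_opNorm_mul _ _) (norm_nonneg _)) (norm_nonneg _)
    _ ≤ ‖M‖ * ‖U‖ * ‖W‖ * ‖Vᵀ‖ * ‖N‖ :=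
      mul_le_mul_of_nonneg_right (mul_le_mul_of_nonneg_right
        (mul_le_mul_of_nonneg_right (Matrix.l2_opNorm_mul _ _) (norm_nonneg _))
        (norm_nonneg _)) (norm_nonneg _)
    _ = ‖M‖ * ‖U‖ * ‖W‖ * ‖V‖ * ‖N‖ := by rw [smw_norm_transpose]

/-- If `1 + E` is invertible and `‖E‖ ≤ 1/2`, then `‖(1+E)⁻¹‖ ≤ 2`. -/
private lemma smw_inv_bound {k : ℕ} (E : Matrix (Fin k) (Fin k) ℝ)
    (h : IsUnit (1 + E)) (hE : ‖E‖ ≤ 1 / 2) : ‖(1 + E)⁻¹‖ ≤ 2 := by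
  have hdet := (Matrix.isUnit_iff_isUnit_det _).mp h
  have hmul : (1 + E) * (1 + E)⁻¹ = 1 := Matrix.mul_nonsing_inv _ hdet
  rw [add_mul, one_mul] at hmul
  have hid : (1 + E)⁻¹ = 1 - E * (1 + E)⁻¹ := eq_sub_of_add_eq hmul
  have hb : ‖(1 + E)⁻¹‖ ≤ 1 + (1 / 2) * ‖(1 + E)⁻¹‖ := by
    calc ‖(1 + E)⁻¹‖ = ‖1 - E * (1 + E)⁻¹‖ := by rw [← hid]
      _ ≤ ‖(1 : Matrix (Fin k) (Fin k) ℝ)‖ + ‖E * (1 + E)⁻¹‖ := norm_sub_le _ _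
      _ ≤ 1 + (1 / 2) * ‖(1 + E)⁻¹‖ := by
          have h2 := Matrix.l2_opNorm_mul E (1 + E)⁻¹
          have h3 := smw_norm_one_le k
          nlinarith [norm_nonneg ((1 + E)⁻¹), norm_nonneg E]
  linarith

/-- Perturbation bounds for the inverse. -/
private lemma smw_inv_perturb {k : ℕ} (C F : Matrix (Fin k) (Fin k) ℝ)
    (hC : IsUnit C) (hK : IsUnit (C + F)) (hs : ‖F‖ * ‖C⁻¹‖ ≤ 1 / 2) :
    ‖(C + F)⁻¹‖ ≤ 2 * ‖C⁻¹‖ ∧ ‖(C + F)⁻¹ - C⁻¹‖ ≤ 2 * ‖C⁻¹‖ * ‖F‖ * ‖C⁻¹‖ := by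
  have hdetC := (Matrix.isUnit_iff_isUnit_det _).mp hC
  have hdetK := (Matrix.isUnit_iff_isUnit_det _).mp hK
  have h1 : C * C⁻¹ = 1 := Matrix.mul_nonsing_inv _ hdetC
  have h2 : (C + F)⁻¹ * (C + F) = 1 := Matrix.nonsing_inv_mul _ hdetK
  have hid : C⁻¹ = (C + F)⁻¹ + (C + F)⁻¹ * F * C⁻¹ := by
    have h3 : (C + F)⁻¹ * (C + F) * C⁻¹ = C⁻¹ := by rw [h2, one_mul]
    calc C⁻¹ = (C + F)⁻¹ * (C + F) * C⁻¹ := h3.symm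
      _ = (C + F)⁻¹ * (C * C⁻¹) + (C + F)⁻¹ * F * C⁻¹ := by
          rw [Matrix.mul_add, Matrix.add_mul, Matrix.mul_assoc]
      _ = (C + F)⁻¹ + (C + F)⁻¹ * F * C⁻¹ := by rw [h1, Matrix.mul_one]
  have htriple := smw_mul3 (C + F)⁻¹ F C⁻¹
  have h5 : (C + F)⁻¹ = C⁻¹ - (C + F)⁻¹ * F * C⁻¹ := eq_sub_of_add_eq hid.symm
  have hKb : ‖(C + F)⁻¹‖ ≤ 2 * ‖C⁻¹‖ := by
    have h4 : ‖(C + F)⁻¹‖ ≤ ‖C⁻¹‖ + ‖(C + F)⁻¹ * F * C⁻¹‖ := by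
      have := norm_sub_le C⁻¹ ((C + F)⁻¹ * F * C⁻¹)
      rw [← h5] at this
      linarith [norm_nonneg ((C + F)⁻¹ * F * C⁻¹)]
    nlinarith [norm_nonneg ((C + F)⁻¹), norm_nonneg C⁻¹, norm_nonneg F]
  refine ⟨hKb, ?_⟩
  have hdiff : (C + F)⁻¹ - C⁻¹ = -((C + F)⁻¹ * F * C⁻¹) := by
    conv_lhs => rw [h5]
    abel
  rw [hdiff, norm_neg]
  calc ‖(C + F)⁻¹ * F * C⁻¹‖ ≤ ‖(C + F)⁻¹‖ * ‖F‖ * ‖C⁻¹‖ := htriple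
    _ ≤ 2 * ‖C⁻¹‖ * ‖F‖ * ‖C⁻¹‖ := by
        have := mul_nonneg (norm_nonneg F) (norm_nonneg (C⁻¹ : Matrix (Fin k) (Fin k) ℝ))
        nlinarith [norm_nonneg F, norm_nonneg (C⁻¹ : Matrix (Fin k) (Fin k) ℝ), hKb]

/-- Forward error bound for approximate SMW, small-update case.
Here σ_min(A) = ‖A⁻¹‖⁻¹. -/
theorem smw_forward_error_small_update {n k : ℕ}
    (A : Matrix (Fin n) (Fin n) ℝ) (hA : IsUnit A)
    (U V : Matrix (Fin n) (Fin k) ℝ) (lam : ℝ) (hlam : lam = ‖U‖ * ‖V‖)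
    (B : Matrix (Fin n) (Fin n) ℝ) (hB : B = A + U * Vᵀ) (hBinv : IsUnit B)
    (hsmall : lam ≤ (1 / 2) * ‖A⁻¹‖⁻¹)
    (hcap : IsUnit ((1 : Matrix (Fin k) (Fin k) ℝ) + Vᵀ * A⁻¹ * U))
    (hσ : ‖A⁻¹‖⁻¹ ≤ 1)
    (X : Matrix (Fin n) (Fin n) ℝ) (ε₁ ε₂ : ℝ)
    (hX : ‖X - A⁻¹‖ ≤ ε₁) (hε₁1 : ε₁ ≤ 1)
    (hε₁ : ε₁ < 1 / (2 * lam * ‖((1 : Matrix (Fin k) (Fin k) ℝ) + Vᵀ * A⁻¹ * U)⁻¹‖))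
    (hcapX : IsUnit ((1 : Matrix (Fin k) (Fin k) ℝ) + Vᵀ * X * U))
    (Z : Matrix (Fin k) (Fin k) ℝ)
    (hZ : ‖Z - ((1 : Matrix (Fin k) (Fin k) ℝ) + Vᵀ * X * U)⁻¹‖ ≤ ε₂) (hε₂1 : ε₂ ≤ 1) :
    ‖B⁻¹ - (X - X * U * Z * Vᵀ * X)‖ ≤ 2 * ε₂ * ‖A⁻¹‖ + 12 * ε₁ := by
  have hε₁0 : 0 ≤ ε₁ := le_trans (norm_nonneg _) hX
  have hε₂0 : 0 ≤ ε₂ := le_trans (norm_nonneg _) hZ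
  rcases Nat.eq_zero_or_pos n with hn | hn
  · subst hn
    have h0 : B⁻¹ - (X - X * U * Z * Vᵀ * X) = 0 := by
      ext i j; exact i.elim0
    rw [h0, norm_zero]
    have := norm_nonneg (A⁻¹ : Matrix (Fin 0) (Fin 0) ℝ)
    nlinarith
  -- main case
  have hlam0 : 0 ≤ lam := hlam ▸ mul_nonneg (norm_nonneg _) (norm_nonneg _)
  have ha0 : 0 < ‖A⁻¹‖ := by
    rw [norm_pos_iff]
    intro h0
    have hinv : A⁻¹ * A = 1 :=
      Matrix.nonsing_inv_mul _ ((Matrix.isUnit_iff_isUnit_det A).mp hA)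
    rw [h0, Matrix.zero_mul] at hinv
    have := congrFun (congrFun hinv ⟨0, hn⟩) ⟨0, hn⟩
    simp [Matrix.one_apply] at this
  have ha1 : 1 ≤ ‖A⁻¹‖ := by
    have h := inv_mul_cancel₀ (ne_of_gt ha0)
    nlinarith [mul_le_mul_of_nonneg_right hσ ha0.le]
  have hla : lam * ‖A⁻¹‖ ≤ 1 / 2 := by
    have h := inv_mul_cancel₀ (ne_of_gt ha0)
    nlinarith [mul_le_mul_of_nonneg_right hsmall ha0.le]
  -- Woodbury identity
  have hwood : B⁻¹ = A⁻¹ - A⁻¹ * U *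
      ((1 : Matrix (Fin k) (Fin k) ℝ) + Vᵀ * A⁻¹ * U)⁻¹ * Vᵀ * A⁻¹ := by
    have h1 : IsUnit ((1 : Matrix (Fin k) (Fin k) ℝ)⁻¹ + Vᵀ * A⁻¹ * U) := by
      rwa [inv_one]
    have h2 := Matrix.add_mul_mul_inv_eq_sub A U 1 Vᵀ hA isUnit_one h1
    rw [Matrix.mul_one, inv_one] at h2
    rw [hB, h2]
  -- bound on ‖C⁻¹‖
  have hE : ‖Vᵀ * A⁻¹ * U‖ ≤ 1 / 2 := by
    have h := smw_sandwich A⁻¹ U V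
    have : ‖V‖ * ‖A⁻¹‖ * ‖U‖ = lam * ‖A⁻¹‖ := by rw [hlam]; ring
    linarith [this ▸ h]
  have hCi2 : ‖((1 : Matrix (Fin k) (Fin k) ℝ) + Vᵀ * A⁻¹ * U)⁻¹‖ ≤ 2 :=
    smw_inv_bound _ hcap hE
  have hCi0 : 0 ≤ ‖((1 : Matrix (Fin k) (Fin k) ℝ) + Vᵀ * A⁻¹ * U)⁻¹‖ := norm_nonneg _
  -- the key smallness from hε₁
  have hkey : lam * ε₁ * ‖((1 : Matrix (Fin k) (Fin k) ℝ) + Vᵀ * A⁻¹ * U)⁻¹‖ < 1 / 2 := by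
    set c := ‖((1 : Matrix (Fin k) (Fin k) ℝ) + Vᵀ * A⁻¹ * U)⁻¹‖ with hc
    rcases lt_or_eq_of_le (mul_nonneg (mul_nonneg (by norm_num : (0:ℝ) ≤ 2) hlam0) hCi0)
      with hpos | heq
    · have := (lt_div_iff₀ hpos).mp hε₁
      nlinarith
    · rw [← heq, div_zero] at hε₁
      linarith
  -- perturbation of the capacitance matrix
  have hCxeq : (1 : Matrix (Fin k) (Fin k) ℝ) + Vᵀ * X * U =
      ((1 : Matrix (Fin k) (Fin k) ℝ) + Vᵀ * A⁻¹ * U) + Vᵀ * (X - A⁻¹) * U := by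
    rw [Matrix.mul_sub, Matrix.sub_mul]; abel
  have hF : ‖Vᵀ * (X - A⁻¹) * U‖ ≤ lam * ε₁ := by
    have h := smw_sandwich (X - A⁻¹) U V
    have h2 : ‖V‖ * ‖X - A⁻¹‖ * ‖U‖ ≤ ‖V‖ * ε₁ * ‖U‖ := by
      have := mul_nonneg (norm_nonneg V) (norm_nonneg U)
      nlinarith [norm_nonneg V, norm_nonneg U]
    have h3 : ‖V‖ * ε₁ * ‖U‖ = lam * ε₁ := by rw [hlam]; ring
    linarith [h3 ▸ h2]
  have hcapX2 : IsUnit (((1 : Matrix (Fin k) (Fin k) ℝ) + Vᵀ * A⁻¹ * U)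
      + Vᵀ * (X - A⁻¹) * U) := by rwa [← hCxeq]
  have hsF : ‖Vᵀ * (X - A⁻¹) * U‖ * ‖((1 : Matrix (Fin k) (Fin k) ℝ) + Vᵀ * A⁻¹ * U)⁻¹‖
      ≤ 1 / 2 := by
    nlinarith [mul_le_mul_of_nonneg_right hF hCi0]
  have hperturb := smw_inv_perturb ((1 : Matrix (Fin k) (Fin k) ℝ) + Vᵀ * A⁻¹ * U)
      (Vᵀ * (X - A⁻¹) * U) hcap hcapX2 hsF
  rw [← hCxeq] at hperturb
  obtain ⟨hKi, hdiffKC⟩ := hperturb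
  have hKi4 : ‖((1 : Matrix (Fin k) (Fin k) ℝ) + Vᵀ * X * U)⁻¹‖ ≤ 4 := by linarith
  have hdiff8 : ‖((1 : Matrix (Fin k) (Fin k) ℝ) + Vᵀ * X * U)⁻¹ -
      ((1 : Matrix (Fin k) (Fin k) ℝ) + Vᵀ * A⁻¹ * U)⁻¹‖ ≤ 8 * (lam * ε₁) := by
    have h1 : ‖((1 : Matrix (Fin k) (Fin k) ℝ) + Vᵀ * A⁻¹ * U)⁻¹‖ * ‖Vᵀ * (X - A⁻¹) * U‖
        ≤ 2 * (lam * ε₁) := mul_le_mul hCi2 hF (norm_nonneg _) (by norm_num)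
    have h2 : ‖((1 : Matrix (Fin k) (Fin k) ℝ) + Vᵀ * A⁻¹ * U)⁻¹‖ * ‖Vᵀ * (X - A⁻¹) * U‖ *
        ‖((1 : Matrix (Fin k) (Fin k) ℝ) + Vᵀ * A⁻¹ * U)⁻¹‖ ≤ 2 * (lam * ε₁) * 2 := by
      have h0 : 0 ≤ lam * ε₁ := mul_nonneg hlam0 hε₁0
      exact mul_le_mul h1 hCi2 (norm_nonneg _) (by linarith)
    linarith [hdiffKC]
  -- norm of X and Z
  have hXn : ‖X‖ ≤ 2 * ‖A⁻¹‖ := by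
    have h := norm_add_le (X - A⁻¹) A⁻¹
    rw [sub_add_cancel] at h
    linarith
  have hZn : ‖Z‖ ≤ 5 := by
    have h := norm_add_le (Z - ((1 : Matrix (Fin k) (Fin k) ℝ) + Vᵀ * X * U)⁻¹)
      ((1 : Matrix (Fin k) (Fin k) ℝ) + Vᵀ * X * U)⁻¹
    rw [sub_add_cancel] at h
    linarith
  have hZ0 : 0 ≤ ‖Z‖ := norm_nonneg _
  -- decomposition
  set Ci := ((1 : Matrix (Fin k) (Fin k) ℝ) + Vᵀ * A⁻¹ * U)⁻¹ with hCidef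
  set Ki := ((1 : Matrix (Fin k) (Fin k) ℝ) + Vᵀ * X * U)⁻¹ with hKidef
  have hdecomp : B⁻¹ - (X - X * U * Z * Vᵀ * X) =
      (A⁻¹ - X) - ((A⁻¹ - X) * U * Ci * Vᵀ * A⁻¹ + X * U * (Ci - Ki) * Vᵀ * A⁻¹
        + X * U * (Ki - Z) * Vᵀ * A⁻¹ + X * U * Z * Vᵀ * (A⁻¹ - X)) := by
    rw [hwood]
    simp only [Matrix.sub_mul, Matrix.mul_sub]
    abel
  rw [hdecomp]
  -- term-by-term bounds
  have t0 : ‖A⁻¹ - X‖ ≤ ε₁ := by rw [norm_sub_rev]; exact hX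
  have t1 : ‖(A⁻¹ - X) * U * Ci * Vᵀ * A⁻¹‖ ≤ ε₁ := by
    have h := smw_mul5 (A⁻¹ - X) A⁻¹ U V Ci
    have h2 : ‖A⁻¹ - X‖ * ‖U‖ * ‖Ci‖ * ‖V‖ * ‖A⁻¹‖ ≤ ε₁ * ‖U‖ * 2 * ‖V‖ * ‖A⁻¹‖ := by
      gcongr
    have h3 : ε₁ * ‖U‖ * 2 * ‖V‖ * ‖A⁻¹‖ = 2 * ε₁ * (lam * ‖A⁻¹‖) := by rw [hlam]; ring
    have h4 := mul_le_mul_of_nonneg_left hla (by linarith : (0:ℝ) ≤ 2 * ε₁)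
    linarith
  have t2 : ‖X * U * (Ci - Ki) * Vᵀ * A⁻¹‖ ≤ 4 * ε₁ := by
    have h := smw_mul5 X A⁻¹ U V (Ci - Ki)
    have hd : ‖Ci - Ki‖ ≤ 8 * (lam * ε₁) := by rw [norm_sub_rev]; exact hdiff8
    have h2 : ‖X‖ * ‖U‖ * ‖Ci - Ki‖ * ‖V‖ * ‖A⁻¹‖ ≤
        (2 * ‖A⁻¹‖) * ‖U‖ * (8 * (lam * ε₁)) * ‖V‖ * ‖A⁻¹‖ := by
      gcongr
    have h3 : (2 * ‖A⁻¹‖) * ‖U‖ * (8 * (lam * ε₁)) * ‖V‖ * ‖A⁻¹‖ =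
        16 * ε₁ * ((lam * ‖A⁻¹‖) * (lam * ‖A⁻¹‖)) := by rw [hlam]; ring
    have ht0 : 0 ≤ lam * ‖A⁻¹‖ := mul_nonneg hlam0 ha0.le
    have hsq : (lam * ‖A⁻¹‖) * (lam * ‖A⁻¹‖) ≤ 1 / 4 := by nlinarith
    have h4 := mul_le_mul_of_nonneg_left hsq (by linarith : (0:ℝ) ≤ 16 * ε₁)
    linarith
  have t3 : ‖X * U * (Ki - Z) * Vᵀ * A⁻¹‖ ≤ ε₂ * ‖A⁻¹‖ := by
    have h := smw_mul5 X A⁻¹ U V (Ki - Z)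
    have hd : ‖Ki - Z‖ ≤ ε₂ := by rw [norm_sub_rev]; exact hZ
    have h2 : ‖X‖ * ‖U‖ * ‖Ki - Z‖ * ‖V‖ * ‖A⁻¹‖ ≤
        (2 * ‖A⁻¹‖) * ‖U‖ * ε₂ * ‖V‖ * ‖A⁻¹‖ := by gcongr
    have h3 : (2 * ‖A⁻¹‖) * ‖U‖ * ε₂ * ‖V‖ * ‖A⁻¹‖ =
        2 * ε₂ * ‖A⁻¹‖ * (lam * ‖A⁻¹‖) := by rw [hlam]; ring
    have h00 : (0:ℝ) ≤ 2 * ε₂ * ‖A⁻¹‖ := by positivity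
    have h4 := mul_le_mul_of_nonneg_left hla h00
    linarith
  have t4 : ‖X * U * Z * Vᵀ * (A⁻¹ - X)‖ ≤ 5 * ε₁ := by
    have h := smw_mul5 X (A⁻¹ - X) U V Z
    have h2 : ‖X‖ * ‖U‖ * ‖Z‖ * ‖V‖ * ‖A⁻¹ - X‖ ≤
        (2 * ‖A⁻¹‖) * ‖U‖ * 5 * ‖V‖ * ε₁ := by gcongr
    have h3 : (2 * ‖A⁻¹‖) * ‖U‖ * 5 * ‖V‖ * ε₁ = 10 * ε₁ * (lam * ‖A⁻¹‖) := by
      rw [hlam]; ring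
    have h4 := mul_le_mul_of_nonneg_left hla (by linarith : (0:ℝ) ≤ 10 * ε₁)
    linarith
  -- put it together
  have hsum : ‖(A⁻¹ - X) * U * Ci * Vᵀ * A⁻¹ + X * U * (Ci - Ki) * Vᵀ * A⁻¹
      + X * U * (Ki - Z) * Vᵀ * A⁻¹ + X * U * Z * Vᵀ * (A⁻¹ - X)‖ ≤
      ε₁ + 4 * ε₁ + ε₂ * ‖A⁻¹‖ + 5 * ε₁ := by
    calc _ ≤ ‖(A⁻¹ - X) * U * Ci * Vᵀ * A⁻¹ + X * U * (Ci - Ki) * Vᵀ * A⁻¹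
        + X * U * (Ki - Z) * Vᵀ * A⁻¹‖ + ‖X * U * Z * Vᵀ * (A⁻¹ - X)‖ := norm_add_le _ _
      _ ≤ ‖(A⁻¹ - X) * U * Ci * Vᵀ * A⁻¹ + X * U * (Ci - Ki) * Vᵀ * A⁻¹‖
          + ‖X * U * (Ki - Z) * Vᵀ * A⁻¹‖ + ‖X * U * Z * Vᵀ * (A⁻¹ - X)‖ := by
        have := norm_add_le ((A⁻¹ - X) * U * Ci * Vᵀ * A⁻¹ + X * U * (Ci - Ki) * Vᵀ * A⁻¹)
          (X * U * (Ki - Z) * Vᵀ * A⁻¹)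
        linarith
      _ ≤ ‖(A⁻¹ - X) * U * Ci * Vᵀ * A⁻¹‖ + ‖X * U * (Ci - Ki) * Vᵀ * A⁻¹‖
          + ‖X * U * (Ki - Z) * Vᵀ * A⁻¹‖ + ‖X * U * Z * Vᵀ * (A⁻¹ - X)‖ := by
        have := norm_add_le ((A⁻¹ - X) * U * Ci * Vᵀ * A⁻¹) (X * U * (Ci - Ki) * Vᵀ * A⁻¹)
        linarith
      _ ≤ ε₁ + 4 * ε₁ + ε₂ * ‖A⁻¹‖ + 5 * ε₁ := by linarith
  have hfinal := norm_sub_le (A⁻¹ - X) ((A⁻¹ - X) * U * Ci * Vᵀ * A⁻¹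
      + X * U * (Ci - Ki) * Vᵀ * A⁻¹ + X * U * (Ki - Z) * Vᵀ * A⁻¹
      + X * U * Z * Vᵀ * (A⁻¹ - X))
  have h00 : 0 ≤ ε₂ * ‖A⁻¹‖ := mul_nonneg hε₂0 ha0.le
  linarith
end

section
/- (Forward error bound, ill-conditioned capacitance case.) Let A be an invertible n×n real matrix, let U, V be n×k real matrices, set λ = ‖U‖·‖V‖ and B = A + UVᵀ, and assume B is invertible. Assume σ_min(A) ≤ 1 (equivalently ‖A⁻¹‖ ≥ 1), that the capacitance matrix I + Vᵀ A⁻¹ U is invertible with ‖(I + Vᵀ A⁻¹ U)⁻¹‖ ≤ α, and that α ≥ max(λ⁻¹, 1). Let ε ≤ 1 with ε < 1/(2λα), let X be an n×n matrix with ‖X − A⁻¹‖ ≤ ε; assume I + Vᵀ X U is invertible; and let Z be a k×k matrix with ‖Z − (I + Vᵀ X U)⁻¹‖ ≤ ε. Then ‖B⁻¹ − (X − X U Z Vᵀ X)‖ ≤ 16 ε λ² ‖A⁻¹‖² α². -/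
open Matrix
open scoped Matrix.Norms.L2Operator

private lemma smw_mul_norm_le {m p q : Type*} [Fintype m] [Fintype p] [Fintype q]
    [DecidableEq m] [DecidableEq p] [DecidableEq q]
    (M : Matrix m p ℝ) (N : Matrix p q ℝ) {x y : ℝ}
    (hx : ‖M‖ ≤ x) (hy : ‖N‖ ≤ y) : ‖M * N‖ ≤ x * y :=
  (Matrix.l2_opNorm_mul M N).trans
    (mul_le_mul hx hy (norm_nonneg _) ((norm_nonneg _).trans hx))

set_option maxHeartbeats 1000000 in
/-- Forward error bound for approximate SMW, ill-conditioned capacitance case.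
Here σ_min(A) ≤ 1 is expressed as 1 ≤ ‖A⁻¹‖. -/
theorem smw_forward_error_ill_conditioned {n k : ℕ}
    (A : Matrix (Fin n) (Fin n) ℝ) (hA : IsUnit A)
    (U V : Matrix (Fin n) (Fin k) ℝ) (lam : ℝ) (hlam : lam = ‖U‖ * ‖V‖)
    (B : Matrix (Fin n) (Fin n) ℝ) (hB : B = A + U * Vᵀ) (hBinv : IsUnit B)
    (hσ : 1 ≤ ‖A⁻¹‖)
    (α : ℝ) (hcap : IsUnit ((1 : Matrix (Fin k) (Fin k) ℝ) + Vᵀ * A⁻¹ * U))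
    (hα : ‖((1 : Matrix (Fin k) (Fin k) ℝ) + Vᵀ * A⁻¹ * U)⁻¹‖ ≤ α)
    (hαbig : max lam⁻¹ 1 ≤ α)
    (ε : ℝ) (hε1 : ε ≤ 1) (hε : ε < 1 / (2 * lam * α))
    (X : Matrix (Fin n) (Fin n) ℝ) (hX : ‖X - A⁻¹‖ ≤ ε)
    (hcapX : IsUnit ((1 : Matrix (Fin k) (Fin k) ℝ) + Vᵀ * X * U))
    (Z : Matrix (Fin k) (Fin k) ℝ)
    (hZ : ‖Z - ((1 : Matrix (Fin k) (Fin k) ℝ) + Vᵀ * X * U)⁻¹‖ ≤ ε) :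
    ‖B⁻¹ - (X - X * U * Z * Vᵀ * X)‖ ≤ 16 * ε * lam ^ 2 * ‖A⁻¹‖ ^ 2 * α ^ 2 := by
  set C := (1 : Matrix (Fin k) (Fin k) ℝ) + Vᵀ * A⁻¹ * U with hC
  set Ct := (1 : Matrix (Fin k) (Fin k) ℝ) + Vᵀ * X * U with hCt
  set a := ‖A⁻¹‖ with ha
  -- scalar facts
  have hε0 : 0 ≤ ε := (norm_nonneg _).trans hX
  have hα1 : (1 : ℝ) ≤ α := (le_max_right _ _).trans hαbig
  have hα0 : 0 < α := lt_of_lt_of_le one_pos hα1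
  have hlam0 : 0 < lam := by
    rcases lt_or_ge 0 lam with h | h
    · exact h
    · exfalso
      have hle : 1 / (2 * lam * α) ≤ 0 := by
        rcases eq_or_lt_of_le h with h' | h'
        · rw [h', mul_zero, zero_mul]; simp
        · have : 2 * lam * α < 0 := mul_neg_of_neg_of_pos (by linarith) hα0
          exact le_of_lt (div_neg_of_pos_of_neg one_pos this)
      linarith [lt_of_le_of_lt (le_trans hε0 (le_of_lt hε)) (lt_of_le_of_lt hle (by norm_num : (0:ℝ) < 1))]
  have hlamα : 1 ≤ lam * α := by
    have h1 : lam⁻¹ ≤ α := (le_max_left _ _).trans hαbig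
    have h2 := mul_le_mul_of_nonneg_left h1 hlam0.le
    rwa [mul_inv_cancel₀ hlam0.ne'] at h2
  have hεlamα : ε * (lam * α) < 1 / 2 := by
    have h2 : 0 < 2 * lam * α := by positivity
    have h3 := (lt_div_iff₀ h2).mp hε
    linarith [h3]
  have hεhalf : ε < 1 / 2 := by
    have h1 := mul_le_mul_of_nonneg_left hlamα hε0
    linarith [h1]
  have hU0 : 0 ≤ ‖U‖ := norm_nonneg _
  have hV0 : 0 ≤ ‖V‖ := norm_nonneg _
  have hVt : ‖Vᵀ‖ = ‖V‖ := by
    rw [← Matrix.conjTranspose_eq_transpose_of_trivial]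
    exact Matrix.l2_opNorm_conjTranspose V
  -- basic matrix inverse facts
  have hAdet := (Matrix.isUnit_iff_isUnit_det A).mp hA
  have hCdet := (Matrix.isUnit_iff_isUnit_det C).mp hcap
  have hCtdet := (Matrix.isUnit_iff_isUnit_det Ct).mp hcapX
  have hAi : A * A⁻¹ = 1 := Matrix.mul_nonsing_inv A hAdet
  have hCi : C * C⁻¹ = 1 := Matrix.mul_nonsing_inv C hCdet
  have hCti : Ct⁻¹ * Ct = 1 := Matrix.nonsing_inv_mul Ct hCtdet
  -- SMW formula
  have hSMW : B⁻¹ = A⁻¹ - A⁻¹ * U * C⁻¹ * Vᵀ * A⁻¹ := by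
    rw [hB]
    apply Matrix.inv_eq_right_inv
    have key : U * Vᵀ * A⁻¹ - (U + U * Vᵀ * A⁻¹ * U) * C⁻¹ * Vᵀ * A⁻¹ = 0 := by
      have h2 : U + U * Vᵀ * A⁻¹ * U = U * C := by
        rw [hC, Matrix.mul_add, Matrix.mul_one, Matrix.mul_assoc, Matrix.mul_assoc,
          Matrix.mul_assoc]
      rw [h2, Matrix.mul_assoc U C C⁻¹, hCi, Matrix.mul_one, sub_self]
    have expand : (A + U * Vᵀ) * (A⁻¹ - A⁻¹ * U * C⁻¹ * Vᵀ * A⁻¹)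
        = 1 + (U * Vᵀ * A⁻¹ - (U + U * Vᵀ * A⁻¹ * U) * C⁻¹ * Vᵀ * A⁻¹) := by
      simp only [Matrix.mul_sub, Matrix.add_mul, Matrix.mul_add, Matrix.sub_mul]
      rw [hAi]
      simp only [← Matrix.mul_assoc]
      rw [hAi]
      simp only [Matrix.one_mul]
      abel
    rw [expand, key, add_zero]
  -- norm of X
  have hXn : ‖X‖ ≤ a + ε := by
    calc ‖X‖ = ‖A⁻¹ + (X - A⁻¹)‖ := by congr 1; abel
    _ ≤ a + ε := (norm_add_le _ _).trans (by gcongr)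
  -- capacitance difference
  have hCtC : ‖Ct - C‖ ≤ lam * ε := by
    have h1 : Ct - C = Vᵀ * (X - A⁻¹) * U := by
      rw [hCt, hC, Matrix.mul_sub, Matrix.sub_mul]
      abel
    rw [h1, hlam]
    calc ‖Vᵀ * (X - A⁻¹) * U‖ ≤ (‖V‖ * ε) * ‖U‖ :=
          smw_mul_norm_le _ _ (smw_mul_norm_le _ _ hVt.le hX) le_rfl
    _ = ‖U‖ * ‖V‖ * ε := by ring
  -- inverse difference identity
  have hid : Ct⁻¹ - C⁻¹ = Ct⁻¹ * (C - Ct) * C⁻¹ := by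
    rw [Matrix.mul_sub, Matrix.sub_mul, Matrix.mul_assoc Ct⁻¹ C C⁻¹, hCi, Matrix.mul_one,
      hCti, Matrix.one_mul]
  have hCCt : ‖C - Ct‖ ≤ lam * ε := (norm_sub_rev Ct C ▸ hCtC)
  -- bound on Ct⁻¹
  have hCtn : ‖Ct⁻¹‖ ≤ 2 * α := by
    have h1 : ‖Ct⁻¹‖ ≤ α + ‖Ct⁻¹‖ * (lam * ε) * α := by
      calc ‖Ct⁻¹‖ = ‖C⁻¹ + (Ct⁻¹ - C⁻¹)‖ := by congr 1; abel
      _ ≤ ‖C⁻¹‖ + ‖Ct⁻¹ * (C - Ct) * C⁻¹‖ := by rw [hid] at *; exact norm_add_le _ _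
      _ ≤ α + ‖Ct⁻¹‖ * (lam * ε) * α := by
          gcongr
          exact smw_mul_norm_le _ _ (smw_mul_norm_le _ _ le_rfl hCCt) hα
    have h2 := mul_le_mul_of_nonneg_left hεlamα.le (norm_nonneg Ct⁻¹)
    linarith [h1, h2]
  -- bound on Ct⁻¹ - C⁻¹
  have hdCi : ‖Ct⁻¹ - C⁻¹‖ ≤ 2 * lam * ε * α ^ 2 := by
    rw [hid]
    calc ‖Ct⁻¹ * (C - Ct) * C⁻¹‖ ≤ (2 * α) * (lam * ε) * α :=
          smw_mul_norm_le _ _ (smw_mul_norm_le _ _ hCtn hCCt) hα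
    _ = 2 * lam * ε * α ^ 2 := by ring
  -- bounds on Z
  have hZn : ‖Z‖ ≤ 2 * α + ε := by
    calc ‖Z‖ = ‖Ct⁻¹ + (Z - Ct⁻¹)‖ := by congr 1; abel
    _ ≤ 2 * α + ε := (norm_add_le _ _).trans (by gcongr)
  have hZC : ‖Z - C⁻¹‖ ≤ ε + 2 * lam * ε * α ^ 2 := by
    calc ‖Z - C⁻¹‖ = ‖(Z - Ct⁻¹) + (Ct⁻¹ - C⁻¹)‖ := by congr 1; abel
    _ ≤ ε + 2 * lam * ε * α ^ 2 := (norm_add_le _ _).trans (by gcongr)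
  -- main decomposition
  have hD : B⁻¹ - (X - X * U * Z * Vᵀ * X)
      = (A⁻¹ - X) + ((X - A⁻¹) * U * Z * (Vᵀ * X))
        + (A⁻¹ * U * (Z - C⁻¹) * (Vᵀ * X)) + (A⁻¹ * U * C⁻¹ * (Vᵀ * (X - A⁻¹))) := by
    rw [hSMW]
    simp only [Matrix.mul_sub, Matrix.sub_mul, Matrix.mul_assoc]
    abel
  -- term bounds
  have hT1 : ‖A⁻¹ - X‖ ≤ ε := norm_sub_rev X A⁻¹ ▸ hX
  have hVX : ‖Vᵀ * X‖ ≤ ‖V‖ * (a + ε) := smw_mul_norm_le _ _ hVt.le hXn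
  have hT2 : ‖(X - A⁻¹) * U * Z * (Vᵀ * X)‖ ≤ ε * ‖U‖ * (2 * α + ε) * (‖V‖ * (a + ε)) :=
    smw_mul_norm_le _ _ (smw_mul_norm_le _ _ (smw_mul_norm_le _ _ hX le_rfl) hZn) hVX
  have hT3 : ‖A⁻¹ * U * (Z - C⁻¹) * (Vᵀ * X)‖
      ≤ a * ‖U‖ * (ε + 2 * lam * ε * α ^ 2) * (‖V‖ * (a + ε)) :=
    smw_mul_norm_le _ _ (smw_mul_norm_le _ _ (smw_mul_norm_le _ _ le_rfl le_rfl) hZC) hVX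
  have hT4 : ‖A⁻¹ * U * C⁻¹ * (Vᵀ * (X - A⁻¹))‖ ≤ a * ‖U‖ * α * (‖V‖ * ε) :=
    smw_mul_norm_le _ _ (smw_mul_norm_le _ _ (smw_mul_norm_le _ _ le_rfl le_rfl) hα)
      (smw_mul_norm_le _ _ hVt.le hX)
  have htri : ‖B⁻¹ - (X - X * U * Z * Vᵀ * X)‖
      ≤ ε + ε * ‖U‖ * (2 * α + ε) * (‖V‖ * (a + ε))
        + a * ‖U‖ * (ε + 2 * lam * ε * α ^ 2) * (‖V‖ * (a + ε))
        + a * ‖U‖ * α * (‖V‖ * ε) := by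
    rw [hD]
    exact (norm_add_le _ _).trans (add_le_add ((norm_add_le _ _).trans (add_le_add
      ((norm_add_le _ _).trans (add_le_add hT1 hT2)) hT3)) hT4)
  -- final arithmetic
  have hεa : ε ≤ a := hε1.trans hσ
  have hεα : ε ≤ α := hε1.trans hα1
  have ha0 : (0:ℝ) < a := lt_of_lt_of_le one_pos hσ
  have hlamα0 : (0:ℝ) ≤ lam * α := zero_le_one.trans hlamα
  have hlamαa : 1 ≤ lam * α * a := by
    have h1 := mul_le_mul_of_nonneg_left hσ hlamα0
    linarith [h1]
  have hlamα2 : 1 ≤ lam * α ^ 2 := by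
    have h1 := mul_le_mul_of_nonneg_left hα1 hlamα0
    linarith [h1]
  have key1 : ε ≤ ε * lam ^ 2 * a ^ 2 * α ^ 2 := by
    have h1 := mul_le_mul_of_nonneg_left
      (mul_le_mul hlamαa hlamαa zero_le_one (by positivity)) hε0
    linarith [h1]
  have key2 : ε * ‖U‖ * (2 * α + ε) * (‖V‖ * (a + ε))
      ≤ 6 * (ε * lam ^ 2 * a ^ 2 * α ^ 2) := by
    have e1 : ε * ‖U‖ * (2 * α + ε) * (‖V‖ * (a + ε)) = ε * lam * (2 * α + ε) * (a + ε) := by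
      rw [hlam]; ring
    rw [e1]
    have n1 : 0 ≤ ε * lam := mul_nonneg hε0 hlam0.le
    have h1 : ε * lam * (2 * α + ε) * (a + ε) ≤ ε * lam * (3 * α) * (2 * a) :=
      mul_le_mul (mul_le_mul_of_nonneg_left (by linarith) n1) (by linarith) (by linarith)
        (mul_nonneg n1 (by linarith))
    have n2 : 0 ≤ 6 * ε * (lam * α * a) :=
      mul_nonneg (mul_nonneg (by norm_num) hε0) (by positivity)
    have h2 : ε * lam * (3 * α) * (2 * a) ≤ 6 * (ε * lam ^ 2 * a ^ 2 * α ^ 2) := by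
      have h3 := mul_le_mul_of_nonneg_left hlamαa n2
      linarith [h3]
    linarith
  have key3 : a * ‖U‖ * (ε + 2 * lam * ε * α ^ 2) * (‖V‖ * (a + ε))
      ≤ 6 * (ε * lam ^ 2 * a ^ 2 * α ^ 2) := by
    have e1 : a * ‖U‖ * (ε + 2 * lam * ε * α ^ 2) * (‖V‖ * (a + ε))
        = a * lam * (ε + 2 * lam * ε * α ^ 2) * (a + ε) := by rw [hlam]; ring
    rw [e1]
    have b1 : ε + 2 * lam * ε * α ^ 2 ≤ 3 * (lam * ε * α ^ 2) := by
      have h1 := mul_le_mul_of_nonneg_left hlamα2 hε0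
      linarith [h1]
    have n1 : 0 ≤ a * lam := mul_nonneg ha0.le hlam0.le
    have n3 : 0 ≤ 3 * (lam * ε * α ^ 2) :=
      mul_nonneg (by norm_num) (mul_nonneg (mul_nonneg hlam0.le hε0) (sq_nonneg α))
    have h1 : a * lam * (ε + 2 * lam * ε * α ^ 2) * (a + ε)
        ≤ a * lam * (3 * (lam * ε * α ^ 2)) * (2 * a) :=
      mul_le_mul (mul_le_mul_of_nonneg_left b1 n1) (by linarith) (by linarith)
        (mul_nonneg n1 n3)
    linarith [h1]

  have key4 : a * ‖U‖ * α * (‖V‖ * ε) ≤ ε * lam ^ 2 * a ^ 2 * α ^ 2 := by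
    have e1 : a * ‖U‖ * α * (‖V‖ * ε) = ε * (lam * α * a) := by rw [hlam]; ring
    rw [e1]
    have h1 := mul_le_mul_of_nonneg_left hlamαa
      (mul_nonneg hε0 (by positivity : (0:ℝ) ≤ lam * α * a))
    linarith [h1]
  have hs : 0 ≤ ε * lam ^ 2 * a ^ 2 * α ^ 2 :=
    mul_nonneg (mul_nonneg (mul_nonneg hε0 (sq_nonneg _)) (sq_nonneg _)) (sq_nonneg _)
  linarith
end

section
/- (Forward error bound in terms of the condition number of V.) Let A be an invertible n×n real matrix, let U, V be n×k real matrices with V of full column rank, set λ = ‖U‖·‖V‖, κ(V) = ‖V‖·‖(VᵀV)⁻¹Vᵀ‖, and B = A + UVᵀ, and assume B is invertible. Assume the capacitance matrix I + Vᵀ A⁻¹ U is invertible with ‖(I + Vᵀ A⁻¹ U)⁻¹‖ ≤ α. Let X be an n×n matrix with ‖X − A⁻¹‖ ≤ ε₁ where ε₁ < 1/(2λα); assume I + Vᵀ X U is invertible; and let Z be a k×k matrix with ‖Z − (I + Vᵀ X U)⁻¹‖ ≤ ε₂. Then ‖B⁻¹ − (X − X U Z Vᵀ X)‖ ≤ ε₁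 + ε₁ λ κ(V) ‖B⁻¹A‖ (2‖A⁻¹‖ + ε₁) + λ(‖A⁻¹‖ + ε₁)² (ε₂ + 2 ε₁ λ (κ(V)‖B⁻¹A‖)²). -/
open Matrix
open scoped Matrix.Norms.L2Operator


lemma smw_mulb {p q r : ℕ} (M : Matrix (Fin p) (Fin q) ℝ) (N : Matrix (Fin q) (Fin r) ℝ)
    {a b : ℝ} (hM : ‖M‖ ≤ a) (hN : ‖N‖ ≤ b) : ‖M * N‖ ≤ a * b :=
  (Matrix.l2_opNorm_mul M N).trans (mul_le_mul hM hN (norm_nonneg _) ((norm_nonneg _).trans hM))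

lemma smw_norm_transpose_s6 {p q : ℕ} (M : Matrix (Fin p) (Fin q) ℝ) : ‖Mᵀ‖ = ‖M‖ := by
  rw [← Matrix.l2_opNorm_conjTranspose M]
  congr 1

set_option maxHeartbeats 1000000 in
/-- Forward error bound in terms of the condition number κ(V) = ‖V‖·‖(VᵀV)⁻¹Vᵀ‖. -/
theorem smw_forward_error_cond_number {n k : ℕ}
    (A : Matrix (Fin n) (Fin n) ℝ) (hA : IsUnit A)
    (U V : Matrix (Fin n) (Fin k) ℝ) (hV : IsUnit (Vᵀ * V))
    (lam : ℝ) (hlam : lam = ‖U‖ * ‖V‖)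
    (κV : ℝ) (hκV : κV = ‖V‖ * ‖(Vᵀ * V)⁻¹ * Vᵀ‖)
    (B : Matrix (Fin n) (Fin n) ℝ) (hB : B = A + U * Vᵀ) (hBinv : IsUnit B)
    (α : ℝ) (hcap : IsUnit ((1 : Matrix (Fin k) (Fin k) ℝ) + Vᵀ * A⁻¹ * U))
    (hα : ‖((1 : Matrix (Fin k) (Fin k) ℝ) + Vᵀ * A⁻¹ * U)⁻¹‖ ≤ α)
    (X : Matrix (Fin n) (Fin n) ℝ) (ε₁ ε₂ : ℝ)
    (hX : ‖X - A⁻¹‖ ≤ ε₁) (hε₁ : ε₁ < 1 / (2 * lam * α))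
    (hcapX : IsUnit ((1 : Matrix (Fin k) (Fin k) ℝ) + Vᵀ * X * U))
    (Z : Matrix (Fin k) (Fin k) ℝ)
    (hZ : ‖Z - ((1 : Matrix (Fin k) (Fin k) ℝ) + Vᵀ * X * U)⁻¹‖ ≤ ε₂) :
    ‖B⁻¹ - (X - X * U * Z * Vᵀ * X)‖ ≤
      ε₁ + ε₁ * lam * κV * ‖B⁻¹ * A‖ * (2 * ‖A⁻¹‖ + ε₁) +
        lam * (‖A⁻¹‖ + ε₁) ^ 2 * (ε₂ + 2 * ε₁ * lam * (κV * ‖B⁻¹ * A‖) ^ 2) := by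
  set C : Matrix (Fin k) (Fin k) ℝ := 1 + Vᵀ * A⁻¹ * U with hCdef
  set Ct : Matrix (Fin k) (Fin k) ℝ := 1 + Vᵀ * X * U with hCtdef
  set E : Matrix (Fin n) (Fin n) ℝ := X - A⁻¹ with hEdef
  -- basic inverse facts
  have hAd : IsUnit A.det := (Matrix.isUnit_iff_isUnit_det A).mp hA
  have hBd : IsUnit B.det := (Matrix.isUnit_iff_isUnit_det B).mp hBinv
  have hCd : IsUnit C.det := (Matrix.isUnit_iff_isUnit_det C).mp hcap
  have hCtd : IsUnit Ct.det := (Matrix.isUnit_iff_isUnit_det Ct).mp hcapX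
  have hVd : IsUnit (Vᵀ * V).det := (Matrix.isUnit_iff_isUnit_det _).mp hV
  have hAA : A⁻¹ * A = 1 := Matrix.nonsing_inv_mul A hAd
  have hBB : B * B⁻¹ = 1 := Matrix.mul_nonsing_inv B hBd
  have hCC : C * C⁻¹ = 1 := Matrix.mul_nonsing_inv C hCd
  have hCC' : C⁻¹ * C = 1 := Matrix.nonsing_inv_mul C hCd
  have hCtCt : Ct * Ct⁻¹ = 1 := Matrix.mul_nonsing_inv Ct hCtd
  -- Sherman-Morrison-Woodbury
  have hSMW : B⁻¹ = A⁻¹ - A⁻¹ * U * C⁻¹ * Vᵀ * A⁻¹ := by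
    have h1 : IsUnit ((1 : Matrix (Fin k) (Fin k) ℝ)⁻¹ + Vᵀ * A⁻¹ * U) := by
      rwa [inv_one]
    have := Matrix.add_mul_mul_inv_eq_sub A U 1 Vᵀ hA isUnit_one h1
    rw [Matrix.mul_one, inv_one] at this
    rw [hB, this]
  -- push-through: C⁻¹ * Vᵀ = Vᵀ * (B⁻¹ * A)
  have hpush : C⁻¹ * Vᵀ = Vᵀ * (B⁻¹ * A) := by
    have h1 : C * (Vᵀ * (B⁻¹ * A)) = Vᵀ := by
      have h2 : C * Vᵀ = Vᵀ * A⁻¹ * B := by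
        rw [hCdef, hB]
        simp only [Matrix.add_mul, Matrix.mul_add, Matrix.one_mul, Matrix.mul_assoc]
        rw [hAA, Matrix.mul_one]
      calc C * (Vᵀ * (B⁻¹ * A)) = (C * Vᵀ) * (B⁻¹ * A) := by
            simp only [Matrix.mul_assoc]
        _ = Vᵀ * A⁻¹ * (B * B⁻¹) * A := by rw [h2]; simp only [Matrix.mul_assoc]
        _ = Vᵀ := by rw [hBB, Matrix.mul_one, Matrix.mul_assoc, hAA, Matrix.mul_one]
    calc C⁻¹ * Vᵀ = C⁻¹ * (C * (Vᵀ * (B⁻¹ * A))) := by rw [h1]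
      _ = Vᵀ * (B⁻¹ * A) := by rw [← Matrix.mul_assoc, hCC', Matrix.one_mul]
  -- bound ‖C⁻¹‖ ≤ κV * ‖B⁻¹ * A‖
  have hVtn : ‖Vᵀ‖ = ‖V‖ := smw_norm_transpose_s6 V
  have hpinvT : (((Vᵀ * V)⁻¹) * Vᵀ)ᵀ = V * (Vᵀ * V)⁻¹ := by
    rw [Matrix.transpose_mul, Matrix.transpose_transpose, Matrix.transpose_nonsing_inv,
      Matrix.transpose_mul, Matrix.transpose_transpose]
  have hCinv : ‖C⁻¹‖ ≤ κV * ‖B⁻¹ * A‖ := by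
    have hfac : C⁻¹ = (C⁻¹ * Vᵀ) * (V * (Vᵀ * V)⁻¹) := by
      calc C⁻¹ = C⁻¹ * ((Vᵀ * V) * (Vᵀ * V)⁻¹) := by
            rw [Matrix.mul_nonsing_inv _ hVd, Matrix.mul_one]
        _ = (C⁻¹ * Vᵀ) * (V * (Vᵀ * V)⁻¹) := by simp only [Matrix.mul_assoc]
    rw [hfac, hpush]
    have h1 : ‖Vᵀ * (B⁻¹ * A)‖ ≤ ‖V‖ * ‖B⁻¹ * A‖ := by
      rw [← hVtn]; exact smw_mulb _ _ le_rfl le_rfl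
    have h2 : ‖V * (Vᵀ * V)⁻¹‖ = ‖(Vᵀ * V)⁻¹ * Vᵀ‖ := by
      rw [← hpinvT, smw_norm_transpose_s6]
    have h3 := smw_mulb (Vᵀ * (B⁻¹ * A)) (V * (Vᵀ * V)⁻¹) h1 (le_of_eq h2)
    rw [hκV]
    calc ‖Vᵀ * (B⁻¹ * A) * (V * (Vᵀ * V)⁻¹)‖ ≤ _ := h3
      _ = ‖V‖ * ‖(Vᵀ * V)⁻¹ * Vᵀ‖ * ‖B⁻¹ * A‖ := by ring
  -- scalar facts
  have hε₁0 : 0 ≤ ε₁ := (norm_nonneg _).trans hX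
  have hε₂0 : 0 ≤ ε₂ := (norm_nonneg _).trans hZ
  have hl0 : 0 ≤ lam := by rw [hlam]; positivity
  have ha0 : 0 ≤ α := (norm_nonneg _).trans hα
  have hκV0 : 0 ≤ κV := by rw [hκV]; positivity
  have hm0 : 0 ≤ κV * ‖B⁻¹ * A‖ := mul_nonneg hκV0 (norm_nonneg _)
  have hla : 0 < 2 * lam * α := by
    rcases lt_or_eq_of_le (by positivity : (0:ℝ) ≤ 2 * lam * α) with h | h
    · exact h
    · exfalso; rw [← h, div_zero] at hε₁; linarith
  have hsmall : ε₁ * (2 * lam * α) < 1 := (lt_div_iff₀ hla).mp hε₁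
  -- perturbation of the capacitance matrix
  have hDn : ‖Vᵀ * E * U‖ ≤ lam * ε₁ := by
    calc ‖Vᵀ * E * U‖ ≤ ‖V‖ * ε₁ * ‖U‖ :=
          smw_mulb _ _ (smw_mulb _ _ hVtn.le hX) le_rfl
      _ = lam * ε₁ := by rw [hlam]; ring
  have hCtC : Ct = C + Vᵀ * E * U := by
    rw [hCtdef, hCdef, hEdef]
    simp only [Matrix.mul_sub, Matrix.sub_mul]
    abel
  have hid : Ct⁻¹ = C⁻¹ - Ct⁻¹ * (Vᵀ * E * U) * C⁻¹ := by
    apply Matrix.inv_eq_right_inv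
    have expand : Ct * (C⁻¹ - Ct⁻¹ * (Vᵀ * E * U) * C⁻¹)
        = Ct * C⁻¹ - (Ct * Ct⁻¹) * ((Vᵀ * E * U) * C⁻¹) := by
      simp only [Matrix.mul_sub, Matrix.mul_assoc]
    rw [expand, hCtCt, Matrix.one_mul, hCtC, Matrix.add_mul, hCC]
    abel
  have hCtn : ‖Ct⁻¹‖ ≤ 2 * ‖C⁻¹‖ := by
    have h1 : ‖Ct⁻¹ * (Vᵀ * E * U) * C⁻¹‖ ≤ ‖Ct⁻¹‖ * (lam * ε₁) * α :=
      smw_mulb _ _ (smw_mulb _ _ le_rfl hDn) hα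
    have h2 : ‖Ct⁻¹‖ ≤ ‖C⁻¹‖ + ‖Ct⁻¹‖ * (lam * ε₁) * α := by
      have h3 : ‖Ct⁻¹‖ ≤ ‖C⁻¹‖ + ‖Ct⁻¹ * (Vᵀ * E * U) * C⁻¹‖ := by
        conv_lhs => rw [hid]
        exact norm_sub_le _ _
      linarith
    nlinarith [norm_nonneg Ct⁻¹, norm_nonneg C⁻¹,
      mul_le_mul_of_nonneg_left hsmall.le (norm_nonneg Ct⁻¹)]
  have hGn : ‖Ct⁻¹ - C⁻¹‖ ≤ 2 * ε₁ * lam * (κV * ‖B⁻¹ * A‖) ^ 2 := by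
    have h1 : ‖Ct⁻¹ * (Vᵀ * E * U) * C⁻¹‖ ≤ (2 * ‖C⁻¹‖) * (lam * ε₁) * (κV * ‖B⁻¹ * A‖) :=
      smw_mulb _ _ (smw_mulb _ _ hCtn hDn) hCinv
    have h2 : Ct⁻¹ - C⁻¹ = -(Ct⁻¹ * (Vᵀ * E * U) * C⁻¹) := by
      conv_lhs => rw [hid]
      abel
    rw [h2, norm_neg]
    nlinarith [h1, hCinv, norm_nonneg (C⁻¹), hε₁0, hl0, hm0,
      mul_le_mul_of_nonneg_right hCinv hm0, mul_nonneg hl0 hε₁0]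
  -- key algebraic identity
  have hkey : B⁻¹ - (X - X * U * Z * Vᵀ * X)
      = (A⁻¹ - X) + X * U * (Z - C⁻¹) * Vᵀ * X + E * U * C⁻¹ * Vᵀ * X
        + A⁻¹ * U * C⁻¹ * Vᵀ * E := by
    rw [hSMW, hEdef]
    simp only [Matrix.sub_mul, Matrix.mul_sub, Matrix.add_mul, Matrix.mul_add, Matrix.mul_assoc]
    abel
  -- term bounds
  have hXn : ‖X‖ ≤ ‖A⁻¹‖ + ε₁ := by
    have hx : X = A⁻¹ + E := by rw [hEdef]; abel
    rw [hx]; exact (norm_add_le _ _).trans (by linarith)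
  have hZC : ‖Z - C⁻¹‖ ≤ ε₂ + 2 * ε₁ * lam * (κV * ‖B⁻¹ * A‖) ^ 2 := by
    have hzc : Z - C⁻¹ = (Z - Ct⁻¹) + (Ct⁻¹ - C⁻¹) := by abel
    rw [hzc]; exact (norm_add_le _ _).trans (add_le_add hZ hGn)
  have hT1 : ‖X * U * (Z - C⁻¹) * Vᵀ * X‖
      ≤ (‖A⁻¹‖ + ε₁) * ‖U‖ * (ε₂ + 2 * ε₁ * lam * (κV * ‖B⁻¹ * A‖) ^ 2) * ‖V‖ * (‖A⁻¹‖ + ε₁) :=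
    smw_mulb _ _ (smw_mulb _ _ (smw_mulb _ _ (smw_mulb _ _ hXn le_rfl) hZC) hVtn.le) hXn
  have hT2 : ‖E * U * C⁻¹ * Vᵀ * X‖ ≤ ε₁ * ‖U‖ * (κV * ‖B⁻¹ * A‖) * ‖V‖ * (‖A⁻¹‖ + ε₁) :=
    smw_mulb _ _ (smw_mulb _ _ (smw_mulb _ _ (smw_mulb _ _ hX le_rfl) hCinv) hVtn.le) hXn
  have hT3 : ‖A⁻¹ * U * C⁻¹ * Vᵀ * E‖ ≤ ‖A⁻¹‖ * ‖U‖ * (κV * ‖B⁻¹ * A‖) * ‖V‖ * ε₁ :=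
    smw_mulb _ _ (smw_mulb _ _ (smw_mulb _ _ (smw_mulb _ _ le_rfl le_rfl) hCinv) hVtn.le) hX
  have hAX : ‖A⁻¹ - X‖ ≤ ε₁ := by
    rw [show A⁻¹ - X = -E by rw [hEdef]; abel, norm_neg]; exact hX
  rw [hkey]
  have htri : ‖(A⁻¹ - X) + X * U * (Z - C⁻¹) * Vᵀ * X + E * U * C⁻¹ * Vᵀ * X
        + A⁻¹ * U * C⁻¹ * Vᵀ * E‖
      ≤ ‖A⁻¹ - X‖ + ‖X * U * (Z - C⁻¹) * Vᵀ * X‖ + ‖E * U * C⁻¹ * Vᵀ * X‖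
        + ‖A⁻¹ * U * C⁻¹ * Vᵀ * E‖ :=
    (norm_add_le _ _).trans (add_le_add
      ((norm_add_le _ _).trans (add_le_add (norm_add_le _ _) le_rfl)) le_rfl)
  refine htri.trans ?_
  have hfin : ε₁ + (‖A⁻¹‖ + ε₁) * ‖U‖ * (ε₂ + 2 * ε₁ * lam * (κV * ‖B⁻¹ * A‖) ^ 2) * ‖V‖ * (‖A⁻¹‖ + ε₁)
      + ε₁ * ‖U‖ * (κV * ‖B⁻¹ * A‖) * ‖V‖ * (‖A⁻¹‖ + ε₁)
      + ‖A⁻¹‖ * ‖U‖ * (κV * ‖B⁻¹ * A‖) * ‖V‖ * ε₁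
      = ε₁ + ε₁ * lam * κV * ‖B⁻¹ * A‖ * (2 * ‖A⁻¹‖ + ε₁) +
        lam * (‖A⁻¹‖ + ε₁) ^ 2 * (ε₂ + 2 * ε₁ * lam * (κV * ‖B⁻¹ * A‖) ^ 2) := by
    rw [hlam]; ring
  linarith [hT1, hT2, hT3, hAX]
end

section
/- (Two-norm improvement of the Ghadiri–Peng–Vempala backward stability bound, case C = I.) Let ρ ≥ 1 and γ > 0 with γ ≤ ρ. Let à be an invertible n×n real matrix and U, V n×k real matrices such that à + UVᵀ is invertible, ‖U‖ ≤ γ, ‖V‖ ≤ γ, ‖Ã⁻¹‖ ≤ ρ, and ‖(à + UVᵀ)⁻¹‖ ≤ ρ. Let A be an n×n real matrix with ‖à − A‖ ≤ ε₁ < 1. Let Z be an invertible k×k matrix such that Z − Vᵀ Ã⁻¹ U is invertible and ‖Z⁻¹ − (I + Vᵀ Ã⁻¹ U)⁻¹‖ ≤ ε₂ with ε₂ ≤ 1/(512 ρ⁷). Then the matrix Ã⁻¹ − Ã⁻¹ U Z⁻¹ Vᵀ Ã⁻¹ is invertible and ‖(Ã⁻¹ − Ã⁻¹ U Z⁻¹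 Vᵀ Ã⁻¹)⁻¹ − (A + U Vᵀ)‖ ≤ 512 ε₂ ρ¹⁴ + ε₁. -/
open Matrix
open scoped Matrix.Norms.L2Operator

set_option maxHeartbeats 1000000 in
/-- Two-norm improvement of the Ghadiri–Peng–Vempala backward stability bound (case C = I). -/
theorem smw_two_norm_backward_stability {n k : ℕ} (ρ γ : ℝ)
    (hρ : 1 ≤ ρ) (hγ : 0 < γ) (hγρ : γ ≤ ρ)
    (At : Matrix (Fin n) (Fin n) ℝ) (hAt : IsUnit At)
    (U V : Matrix (Fin n) (Fin k) ℝ) (hAUV : IsUnit (At + U * Vᵀ))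
    (hU : ‖U‖ ≤ γ) (hV : ‖V‖ ≤ γ)
    (hAtinv : ‖At⁻¹‖ ≤ ρ) (hAUVinv : ‖(At + U * Vᵀ)⁻¹‖ ≤ ρ)
    (A : Matrix (Fin n) (Fin n) ℝ) (ε₁ ε₂ : ℝ)
    (hA : ‖At - A‖ ≤ ε₁) (hε₁ : ε₁ < 1)
    (Z : Matrix (Fin k) (Fin k) ℝ) (hZ : IsUnit Z)
    (hZS : IsUnit (Z - Vᵀ * At⁻¹ * U))
    (hZinv : ‖Z⁻¹ - ((1 : Matrix (Fin k) (Fin k) ℝ) + Vᵀ * At⁻¹ * U)⁻¹‖ ≤ ε₂)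
    (hε₂ : ε₂ ≤ 1 / (512 * ρ ^ 7)) :
    IsUnit (At⁻¹ - At⁻¹ * U * Z⁻¹ * Vᵀ * At⁻¹) ∧
      ‖(At⁻¹ - At⁻¹ * U * Z⁻¹ * Vᵀ * At⁻¹)⁻¹ - (A + U * Vᵀ)‖ ≤
        512 * ε₂ * ρ ^ 14 + ε₁ := by
  have hρ0 : (0 : ℝ) < ρ := lt_of_lt_of_le one_pos hρ
  have hAtdet : IsUnit At.det := (Matrix.isUnit_iff_isUnit_det At).mp hAt
  set B := At + U * Vᵀ with hBdef
  have hBdet : IsUnit B.det := (Matrix.isUnit_iff_isUnit_det B).mp hAUV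
  have hAtAt : At * At⁻¹ = 1 := Matrix.mul_nonsing_inv At hAtdet
  have hAtAt' : At⁻¹ * At = 1 := Matrix.nonsing_inv_mul At hAtdet
  have hBB' : B⁻¹ * B = 1 := Matrix.nonsing_inv_mul B hBdet
  set W1 := (1 : Matrix (Fin k) (Fin k) ℝ) + Vᵀ * At⁻¹ * U with hW1def
  -- the capacitance matrix is a unit
  have hW1 : IsUnit W1 := by
    have hfac : B = At * ((1 : Matrix (Fin n) (Fin n) ℝ) + At⁻¹ * U * Vᵀ) := by
      rw [Matrix.mul_add, Matrix.mul_one, hBdef]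
      congr 1
      rw [← Matrix.mul_assoc, ← Matrix.mul_assoc, hAtAt, Matrix.one_mul]
    have hdet : B.det = At.det * W1.det := by
      rw [hfac, Matrix.det_mul]
      congr 1
      have h := Matrix.det_one_add_mul_comm (At⁻¹ * U) Vᵀ
      rw [hW1def]
      rw [Matrix.mul_assoc] at h ⊢
      rw [h]
      congr 2
      rw [← Matrix.mul_assoc]
    rw [hdet] at hBdet
    exact (Matrix.isUnit_iff_isUnit_det W1).mpr (isUnit_of_mul_isUnit_right hBdet)
  have hW1det : IsUnit W1.det := (Matrix.isUnit_iff_isUnit_det W1).mp hW1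
  -- SMW identity
  have hSMW : B⁻¹ = At⁻¹ - At⁻¹ * U * W1⁻¹ * Vᵀ * At⁻¹ := by
    have h := Matrix.add_mul_mul_inv_eq_sub At U 1 Vᵀ hAt isUnit_one
      (by rw [inv_one]; exact hW1)
    rw [Matrix.mul_one, inv_one] at h
    exact h
  set D := Z⁻¹ - W1⁻¹ with hDdef
  set M := At⁻¹ - At⁻¹ * U * Z⁻¹ * Vᵀ * At⁻¹ with hMdef
  have hMeq : M = B⁻¹ - At⁻¹ * U * D * Vᵀ * At⁻¹ := by
    rw [hMdef, hSMW, hDdef]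
    simp only [Matrix.mul_sub, Matrix.sub_mul]
    abel
  set F := U * W1 * D * (Vᵀ * At⁻¹) with hFdef
  -- key exchange identities
  have hBU : B * (At⁻¹ * U) = U * W1 := by
    rw [hBdef, hW1def, Matrix.add_mul, Matrix.mul_add, Matrix.mul_one,
      ← Matrix.mul_assoc At, hAtAt, Matrix.one_mul]
    congr 1
    simp only [Matrix.mul_assoc]
  have hBU' : B⁻¹ * (U * W1) = At⁻¹ * U := by
    rw [← hBU, ← Matrix.mul_assoc, hBB', Matrix.one_mul]
  have hVB : Vᵀ * At⁻¹ * B = W1 * Vᵀ := by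
    rw [hBdef, hW1def, Matrix.mul_add, Matrix.add_mul, Matrix.one_mul,
      Matrix.mul_assoc Vᵀ At⁻¹ At, hAtAt', Matrix.mul_one]
    congr 1
    simp only [Matrix.mul_assoc]
  have hMF : M = B⁻¹ * ((1 : Matrix (Fin n) (Fin n) ℝ) - F) := by
    have h1 : At⁻¹ * U * D * Vᵀ * At⁻¹ = B⁻¹ * F := by
      rw [hFdef, ← hBU']
      simp only [Matrix.mul_assoc]
    rw [hMeq, h1, Matrix.mul_sub, Matrix.mul_one]
  -- norm bounds
  have hVt : ‖Vᵀ‖ ≤ γ := by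
    rw [← Matrix.conjTranspose_eq_transpose_of_trivial, Matrix.l2_opNorm_conjTranspose]
    exact hV
  have hD : ‖D‖ ≤ ε₂ := hZinv
  have hD0 : (0 : ℝ) ≤ ε₂ := le_trans (norm_nonneg _) hD
  have hone : ∀ m : ℕ, ‖(1 : Matrix (Fin m) (Fin m) ℝ)‖ ≤ 1 := by
    intro m
    have h := Matrix.l2_opNorm_conjTranspose_mul_self (1 : Matrix (Fin m) (Fin m) ℝ)
    rw [Matrix.conjTranspose_one, Matrix.mul_one] at h
    nlinarith [norm_nonneg (1 : Matrix (Fin m) (Fin m) ℝ)]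
  have hρ3 : (1 : ℝ) ≤ ρ ^ 3 := one_le_pow₀ hρ
  have hγγρ : γ * ρ * γ ≤ ρ ^ 3 := by nlinarith [mul_le_mul hγρ hγρ hγ.le hρ0.le]
  have hW1n : ‖W1‖ ≤ 2 * ρ ^ 3 := by
    have h1 : ‖Vᵀ * At⁻¹ * U‖ ≤ γ * ρ * γ := by
      calc ‖Vᵀ * At⁻¹ * U‖ ≤ ‖Vᵀ * At⁻¹‖ * ‖U‖ := Matrix.l2_opNorm_mul _ _
        _ ≤ (γ * ρ) * γ := by
            apply mul_le_mul _ hU (norm_nonneg _) (by positivity)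
            calc ‖Vᵀ * At⁻¹‖ ≤ ‖Vᵀ‖ * ‖At⁻¹‖ := Matrix.l2_opNorm_mul _ _
              _ ≤ γ * ρ := mul_le_mul hVt hAtinv (norm_nonneg _) hγ.le
    calc ‖W1‖ ≤ ‖(1 : Matrix (Fin k) (Fin k) ℝ)‖ + ‖Vᵀ * At⁻¹ * U‖ := norm_add_le _ _
      _ ≤ 1 + γ * ρ * γ := add_le_add (hone k) h1
      _ ≤ ρ ^ 3 + ρ ^ 3 := add_le_add hρ3 hγγρ
      _ = 2 * ρ ^ 3 := by ring
  have hW1n0 : (0 : ℝ) ≤ 2 * ρ ^ 3 := by positivity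
  have hVA : ‖Vᵀ * At⁻¹‖ ≤ γ * ρ :=
    le_trans (Matrix.l2_opNorm_mul _ _) (mul_le_mul hVt hAtinv (norm_nonneg _) hγ.le)
  have hUWD : ‖U * W1 * D‖ ≤ γ * (2 * ρ ^ 3) * ε₂ := by
    calc ‖U * W1 * D‖ ≤ ‖U * W1‖ * ‖D‖ := Matrix.l2_opNorm_mul _ _
      _ ≤ γ * (2 * ρ ^ 3) * ε₂ := by
          apply mul_le_mul _ hD (norm_nonneg _) (by positivity)
          exact le_trans (Matrix.l2_opNorm_mul _ _)
            (mul_le_mul hU hW1n (norm_nonneg _) hγ.le)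
  have hFn : ‖F‖ ≤ 2 * ε₂ * ρ ^ 6 := by
    calc ‖F‖ ≤ ‖U * W1 * D‖ * ‖Vᵀ * At⁻¹‖ := Matrix.l2_opNorm_mul _ _
      _ ≤ (γ * (2 * ρ ^ 3) * ε₂) * (γ * ρ) :=
          mul_le_mul hUWD hVA (norm_nonneg _) (by positivity)
      _ ≤ (ρ * (2 * ρ ^ 3) * ε₂) * (ρ * ρ) := by
          apply mul_le_mul
          · exact mul_le_mul (mul_le_mul hγρ le_rfl hW1n0 hρ0.le) le_rfl hD0 (by positivity)
          · exact mul_le_mul hγρ le_rfl hρ0.le hρ0.le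
          · positivity
          · positivity
      _ = 2 * ε₂ * ρ ^ 6 := by ring
  have hFsmall : ‖F‖ ≤ 1 / 256 := by
    calc ‖F‖ ≤ 2 * ε₂ * ρ ^ 6 := hFn
      _ ≤ 2 * (1 / (512 * ρ ^ 7)) * ρ ^ 6 := by
          apply mul_le_mul_of_nonneg_right _ (by positivity)
          exact mul_le_mul_of_nonneg_left hε₂ (by norm_num)
      _ = 1 / (256 * ρ) := by field_simp; ring
      _ ≤ 1 / 256 := by
          apply one_div_le_one_div_of_le (by norm_num)
          nlinarith
  have hFlt : ‖F‖ < 1 := lt_of_le_of_lt hFsmall (by norm_num)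
  -- 1 - F is a unit
  have h1F : IsUnit ((1 : Matrix (Fin n) (Fin n) ℝ) - F) := (Units.oneSub F hFlt).isUnit
  have h1Fdet : IsUnit ((1 : Matrix (Fin n) (Fin n) ℝ) - F).det :=
    (Matrix.isUnit_iff_isUnit_det _).mp h1F
  have hMunit : IsUnit M := by
    rw [hMF]
    exact (Matrix.isUnit_nonsing_inv_iff.mpr hAUV).mul h1F
  refine ⟨hMunit, ?_⟩
  -- inverse of M
  have hMinv : M⁻¹ = ((1 : Matrix (Fin n) (Fin n) ℝ) - F)⁻¹ * B := by
    rw [hMF, Matrix.mul_inv_rev, Matrix.nonsing_inv_nonsing_inv B hBdet]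
  set G := ((1 : Matrix (Fin n) (Fin n) ℝ) - F)⁻¹ with hGdef
  have hG1 : G * ((1 : Matrix (Fin n) (Fin n) ℝ) - F) = 1 :=
    Matrix.nonsing_inv_mul _ h1Fdet
  have hGeq : G = 1 + G * F := by
    rw [Matrix.mul_sub, Matrix.mul_one, sub_eq_iff_eq_add] at hG1
    exact hG1
  have hGn : ‖G‖ ≤ 2 := by
    have h2 : ‖G‖ ≤ 1 + ‖G‖ * (1 / 256) := by
      calc ‖G‖ = ‖(1 : Matrix (Fin n) (Fin n) ℝ) + G * F‖ := by rw [← hGeq]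
        _ ≤ ‖(1 : Matrix (Fin n) (Fin n) ℝ)‖ + ‖G * F‖ := norm_add_le _ _
        _ ≤ 1 + ‖G‖ * (1 / 256) := by
            apply add_le_add (hone n)
            exact le_trans (Matrix.l2_opNorm_mul _ _)
              (mul_le_mul_of_nonneg_left hFsmall (norm_nonneg _))
    nlinarith [norm_nonneg G]
  have hG1' : G - 1 = G * F := by
    nth_rewrite 1 [hGeq]
    abel
  -- difference formula
  have hFB : F * B = U * W1 * D * (W1 * Vᵀ) := by
    rw [hFdef, Matrix.mul_assoc (U * W1 * D) (Vᵀ * At⁻¹) B, hVB]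
  have hdiff : M⁻¹ - B = G * (U * W1 * D * (W1 * Vᵀ)) := by
    calc M⁻¹ - B = G * B - 1 * B := by rw [hMinv, Matrix.one_mul]
      _ = (G - 1) * B := by rw [Matrix.sub_mul]
      _ = G * F * B := by rw [hG1']
      _ = G * (F * B) := by rw [Matrix.mul_assoc]
      _ = G * (U * W1 * D * (W1 * Vᵀ)) := by rw [hFB]
  -- norm of the difference
  have hW1V : ‖W1 * Vᵀ‖ ≤ 2 * ρ ^ 3 * γ :=
    le_trans (Matrix.l2_opNorm_mul _ _) (mul_le_mul hW1n hVt (norm_nonneg _) hW1n0)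
  have hdiffn : ‖M⁻¹ - B‖ ≤ 8 * ε₂ * ρ ^ 8 := by
    rw [hdiff]
    calc ‖G * (U * W1 * D * (W1 * Vᵀ))‖ ≤ ‖G‖ * ‖U * W1 * D * (W1 * Vᵀ)‖ :=
          Matrix.l2_opNorm_mul _ _
      _ ≤ 2 * ((γ * (2 * ρ ^ 3) * ε₂) * (2 * ρ ^ 3 * γ)) := by
          apply mul_le_mul hGn _ (norm_nonneg _) (by norm_num)
          exact le_trans (Matrix.l2_opNorm_mul _ _)
            (mul_le_mul hUWD hW1V (norm_nonneg _) (by positivity))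
      _ ≤ 2 * ((ρ * (2 * ρ ^ 3) * ε₂) * (2 * ρ ^ 3 * ρ)) := by
          apply mul_le_mul_of_nonneg_left _ (by norm_num)
          apply mul_le_mul
          · exact mul_le_mul (mul_le_mul hγρ le_rfl hW1n0 hρ0.le) le_rfl hD0 (by positivity)
          · exact mul_le_mul le_rfl hγρ hγ.le (by positivity)
          · positivity
          · positivity
      _ = 8 * ε₂ * ρ ^ 8 := by ring
  -- conclude
  have hfinal : M⁻¹ - (A + U * Vᵀ) = (M⁻¹ - B) + (At - A) := by
    rw [hBdef]; abel
  calc ‖M⁻¹ - (A + U * Vᵀ)‖ = ‖(M⁻¹ - B) + (At - A)‖ := by rw [hfinal]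
    _ ≤ ‖M⁻¹ - B‖ + ‖At - A‖ := norm_add_le _ _
    _ ≤ 8 * ε₂ * ρ ^ 8 + ε₁ := add_le_add hdiffn hA
    _ ≤ 512 * ε₂ * ρ ^ 14 + ε₁ := by
        have h8 : ρ ^ 8 ≤ ρ ^ 14 := pow_le_pow_right₀ hρ (by norm_num)
        linarith [mul_le_mul_of_nonneg_left h8 hD0, mul_nonneg hD0 (pow_nonneg hρ0.le 14)]
end

section
/- (Appendix intermediate bound: closeness of the approximate SMW inverse to the inverse of the perturbed matrix.) Let ρ ≥ 1 and γ > 0. Let à be an invertible n×n real matrix and U, V n×k real matrices such that à + UVᵀ is invertible, ‖U‖ ≤ γ, ‖V‖ ≤ γ, ‖Ã⁻¹‖ ≤ ρ, and ‖(à + UVᵀ)⁻¹‖ ≤ ρ. Let Z be an invertible k×k matrix such that Z − Vᵀ Ã⁻¹ U is invertible and ‖Z⁻¹ − (I + Vᵀ Ã⁻¹ U)⁻¹‖ ≤ ε₂, where ε₂ ≤ 1/(2(1 + γ²ρ)) and 2(γ²ρ + 1)² ε₂ ≤ 1/(2(1 + γ)² ρ). Then ‖(Ã⁻¹ − Ã⁻¹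 U Z⁻¹ Vᵀ Ã⁻¹) − (à + U Vᵀ)⁻¹‖ ≤ 4 (1 + γ)⁴ ρ² (γ² ρ + 1)² ε₂. -/
open Matrix
open scoped Matrix.Norms.L2Operator

/-- Appendix intermediate bound: closeness of the approximate SMW inverse to the
inverse of the perturbed matrix. -/
theorem smw_approx_inverse_closeness {n k : ℕ} (ρ γ : ℝ) (hρ : 1 ≤ ρ) (hγ : 0 < γ)
    (At : Matrix (Fin n) (Fin n) ℝ) (hAt : IsUnit At)
    (U V : Matrix (Fin n) (Fin k) ℝ) (hAUV : IsUnit (At + U * Vᵀ))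
    (hU : ‖U‖ ≤ γ) (hV : ‖V‖ ≤ γ)
    (hAtinv : ‖At⁻¹‖ ≤ ρ) (hAUVinv : ‖(At + U * Vᵀ)⁻¹‖ ≤ ρ)
    (Z : Matrix (Fin k) (Fin k) ℝ) (hZ : IsUnit Z)
    (hZS : IsUnit (Z - Vᵀ * At⁻¹ * U)) (ε₂ : ℝ)
    (hZinv : ‖Z⁻¹ - ((1 : Matrix (Fin k) (Fin k) ℝ) + Vᵀ * At⁻¹ * U)⁻¹‖ ≤ ε₂)
    (hε₂ : ε₂ ≤ 1 / (2 * (1 + γ ^ 2 * ρ)))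
    (hε₂' : 2 * (γ ^ 2 * ρ + 1) ^ 2 * ε₂ ≤ 1 / (2 * (1 + γ) ^ 2 * ρ)) :
    ‖(At⁻¹ - At⁻¹ * U * Z⁻¹ * Vᵀ * At⁻¹) - (At + U * Vᵀ)⁻¹‖ ≤
      4 * (1 + γ) ^ 4 * ρ ^ 2 * (γ ^ 2 * ρ + 1) ^ 2 * ε₂ := by
  have hε₂0 : 0 ≤ ε₂ := le_trans (norm_nonneg _) hZinv
  -- capacitance matrix is invertible
  have hfact : At + U * Vᵀ = At * (1 + (At⁻¹ * U) * Vᵀ) := by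
    rw [mul_add, mul_one, ← Matrix.mul_assoc, ← Matrix.mul_assoc,
      Matrix.mul_nonsing_inv _ (hAt.map (detMonoidHom (R := ℝ))), Matrix.one_mul]
  have hC : IsUnit ((1 : Matrix (Fin k) (Fin k) ℝ) + Vᵀ * At⁻¹ * U) := by
    rw [Matrix.isUnit_iff_isUnit_det]
    have hd : (At + U * Vᵀ).det = At.det * ((1 : Matrix (Fin k) (Fin k) ℝ) + Vᵀ * (At⁻¹ * U)).det := by
      rw [hfact, Matrix.det_mul, Matrix.det_one_add_mul_comm]
    have := (Matrix.isUnit_iff_isUnit_det _).mp hAUV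
    rw [hd] at this
    rw [← Matrix.mul_assoc] at this
    exact isUnit_of_mul_isUnit_right this
  -- Woodbury / SMW identity
  have hsmw : (At + U * Vᵀ)⁻¹ =
      At⁻¹ - At⁻¹ * U * ((1 : Matrix (Fin k) (Fin k) ℝ) + Vᵀ * At⁻¹ * U)⁻¹ * Vᵀ * At⁻¹ := by
    have h1 : At + U * Vᵀ = At + U * (1 : Matrix (Fin k) (Fin k) ℝ) * Vᵀ := by
      rw [Matrix.mul_one]
    rw [h1, Matrix.add_mul_mul_inv_eq_sub At U 1 Vᵀ hAt isUnit_one (by rwa [inv_one])]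
    rw [inv_one]
  set C := ((1 : Matrix (Fin k) (Fin k) ℝ) + Vᵀ * At⁻¹ * U)
  have hdiff : (At⁻¹ - At⁻¹ * U * Z⁻¹ * Vᵀ * At⁻¹) - (At + U * Vᵀ)⁻¹ =
      At⁻¹ * U * (C⁻¹ - Z⁻¹) * Vᵀ * At⁻¹ := by
    rw [hsmw]
    simp only [Matrix.mul_sub, Matrix.sub_mul, Matrix.mul_assoc]
    abel
  rw [hdiff]
  have hVT : ‖Vᵀ‖ = ‖V‖ := by
    rw [← Matrix.conjTranspose_eq_transpose_of_trivial, Matrix.l2_opNorm_conjTranspose]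
  have hmid : ‖C⁻¹ - Z⁻¹‖ ≤ ε₂ := by rw [norm_sub_rev]; exact hZinv
  have hρ0 : (0:ℝ) ≤ ρ := by linarith
  have key : ‖At⁻¹ * U * (C⁻¹ - Z⁻¹) * Vᵀ * At⁻¹‖ ≤ ρ * γ * ε₂ * γ * ρ := by
    calc ‖At⁻¹ * U * (C⁻¹ - Z⁻¹) * Vᵀ * At⁻¹‖
        ≤ ‖At⁻¹ * U * (C⁻¹ - Z⁻¹) * Vᵀ‖ * ‖At⁻¹‖ := Matrix.l2_opNorm_mul _ _
      _ ≤ ‖At⁻¹ * U * (C⁻¹ - Z⁻¹)‖ * ‖Vᵀ‖ * ‖At⁻¹‖ := by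
          gcongr; exact Matrix.l2_opNorm_mul _ _
      _ ≤ ‖At⁻¹ * U‖ * ‖C⁻¹ - Z⁻¹‖ * ‖Vᵀ‖ * ‖At⁻¹‖ := by
          gcongr; exact Matrix.l2_opNorm_mul _ _
      _ ≤ (‖At⁻¹‖ * ‖U‖) * ‖C⁻¹ - Z⁻¹‖ * ‖Vᵀ‖ * ‖At⁻¹‖ := by
          gcongr; exact Matrix.l2_opNorm_mul _ _
      _ ≤ ρ * γ * ε₂ * γ * ρ := by
          rw [hVT]
          gcongr <;> first
            | exact hAtinv | exact hU | exact hmid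
            | exact hV | positivity | exact norm_nonneg _
  refine key.trans ?_
  have h1 : γ ^ 2 ≤ 4 * (1 + γ) ^ 4 := by nlinarith [sq_nonneg γ, sq_nonneg (1+γ), sq_nonneg ((1+γ)^2 - γ)]
  have h2 : (1:ℝ) ≤ (γ ^ 2 * ρ + 1) ^ 2 := by nlinarith [mul_nonneg (sq_nonneg γ) hρ0]
  calc ρ * γ * ε₂ * γ * ρ = γ ^ 2 * 1 * (ρ ^ 2 * ε₂) := by ring
    _ ≤ (4 * (1 + γ) ^ 4) * (γ ^ 2 * ρ + 1) ^ 2 * (ρ ^ 2 * ε₂) := by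
        have := mul_nonneg (sq_nonneg ρ) hε₂0
        gcongr
    _ = 4 * (1 + γ) ^ 4 * ρ ^ 2 * (γ ^ 2 * ρ + 1) ^ 2 * ε₂ := by ring
end

section
/- (Tightness of the inverse-perturbation lemma for general matrices.) Let N be an invertible n×n real matrix, let σ > 0, and let u, v be unit vectors in ℝⁿ such that N v = σ u and Nᵀ u = σ v (i.e., u and v are a pair of left/right singular vectors of N with singular value σ). Set M = N + (σ/2) u vᵀ. Then M is invertible and ‖M⁻¹ − N⁻¹‖ = (1/3)·σ⁻¹. -/
open Matrix
open scoped Matrix.Norms.L2Operator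

section Aux

variable {n : ℕ}

lemma aux_mul_vecMulVec (A : Matrix (Fin n) (Fin n) ℝ) (x y : Fin n → ℝ) :
    A * vecMulVec x y = vecMulVec (A *ᵥ x) y := by
  ext i j
  simp only [mul_apply, vecMulVec_apply, mulVec, dotProduct, Finset.sum_mul]
  exact Finset.sum_congr rfl fun k _ => by ring

lemma aux_vecMulVec_mul (x y : Fin n → ℝ) (A : Matrix (Fin n) (Fin n) ℝ) :
    vecMulVec x y * A = vecMulVec x (Aᵀ *ᵥ y) := by
  ext i j
  simp only [mul_apply, vecMulVec_apply, mulVec, dotProduct, transpose_apply, Finset.mul_sum]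
  exact Finset.sum_congr rfl fun k _ => by ring

lemma aux_vecMulVec_mul_vecMulVec (x y z w : Fin n → ℝ) :
    vecMulVec x y * vecMulVec z w = (y ⬝ᵥ z) • vecMulVec x w := by
  ext i j
  simp only [mul_apply, vecMulVec_apply, Matrix.smul_apply, dotProduct, smul_eq_mul, Finset.sum_mul]
  exact Finset.sum_congr rfl fun k _ => by ring

lemma aux_vecMulVec_smul_left (c : ℝ) (x y : Fin n → ℝ) :
    vecMulVec (c • x) y = c • vecMulVec x y := by
  ext i j
  simp [vecMulVec_apply, mul_assoc]

lemma aux_vecMulVec_smul_right (c : ℝ) (x y : Fin n → ℝ) :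
    vecMulVec x (c • y) = c • vecMulVec x y := by
  ext i j
  simp [vecMulVec_apply]
  ring

lemma aux_dot_self (a : EuclideanSpace ℝ (Fin n)) (ha : ‖a‖ = 1) :
    (a : Fin n → ℝ) ⬝ᵥ (a : Fin n → ℝ) = 1 := by
  have h := real_inner_self_eq_norm_sq a
  rw [ha] at h
  simp only [one_pow] at h
  rw [← h]
  simp only [PiLp.inner_apply, RCLike.inner_apply, conj_trivial, dotProduct]

lemma aux_conjTranspose_vecMulVec (x y : Fin n → ℝ) :
    (vecMulVec x y)ᴴ = vecMulVec y x := by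
  ext i j
  simp [vecMulVec_apply, conjTranspose_apply, mul_comm]

lemma aux_norm_vecMulVec_self (b : EuclideanSpace ℝ (Fin n)) (hb : ‖b‖ = 1) :
    ‖vecMulVec (b : Fin n → ℝ) (b : Fin n → ℝ)‖ = 1 := by
  set B : Matrix (Fin n) (Fin n) ℝ := vecMulVec (b : Fin n → ℝ) (b : Fin n → ℝ) with hB
  have hBB : Bᴴ * B = B := by
    rw [hB, aux_conjTranspose_vecMulVec, aux_vecMulVec_mul_vecMulVec,
      aux_dot_self b hb, one_smul]
  have h := Matrix.l2_opNorm_conjTranspose_mul_self B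
  rw [hBB] at h
  have hBne : B ≠ 0 := by
    intro h0
    obtain ⟨i, hi⟩ : ∃ i, (b : Fin n → ℝ) i ≠ 0 := by
      by_contra hc
      push_neg at hc
      have : b = 0 := by
        ext i; exact hc i
      rw [this, norm_zero] at hb
      norm_num at hb
    have : B i i = 0 := by rw [h0]; rfl
    rw [hB, vecMulVec_apply] at this
    exact hi (by nlinarith)
  have hBnorm : ‖B‖ ≠ 0 := norm_ne_zero_iff.mpr hBne
  have h1 : ‖B‖ * ‖B‖ = ‖B‖ * 1 := by rw [mul_one, ← h]
  exact mul_left_cancel₀ hBnorm h1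

lemma aux_norm_vecMulVec (a b : EuclideanSpace ℝ (Fin n)) (ha : ‖a‖ = 1) (hb : ‖b‖ = 1) :
    ‖vecMulVec (a : Fin n → ℝ) (b : Fin n → ℝ)‖ = 1 := by
  have h := Matrix.l2_opNorm_conjTranspose_mul_self
    (vecMulVec (a : Fin n → ℝ) (b : Fin n → ℝ))
  rw [aux_conjTranspose_vecMulVec, aux_vecMulVec_mul_vecMulVec, aux_dot_self a ha,
    one_smul, aux_norm_vecMulVec_self b hb] at h
  nlinarith [norm_nonneg (vecMulVec (a : Fin n → ℝ) (b : Fin n → ℝ))]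

end Aux

/-- Tightness of the inverse-perturbation lemma for general matrices. -/
theorem smw_inverse_perturbation_tightness {n : ℕ}
    (N : Matrix (Fin n) (Fin n) ℝ) (hN : IsUnit N)
    (σ : ℝ) (hσ : 0 < σ) (u v : EuclideanSpace ℝ (Fin n))
    (hu : ‖u‖ = 1) (hv : ‖v‖ = 1)
    (hNv : N.mulVec v = σ • u) (hNTu : Nᵀ.mulVec u = σ • v)
    (M : Matrix (Fin n) (Fin n) ℝ)
    (hM : M = N + (σ / 2) • vecMulVec u v) :
    IsUnit M ∧ ‖M⁻¹ - N⁻¹‖ = (1 / 3) * σ⁻¹ := by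
  have hσ' : σ ≠ 0 := ne_of_gt hσ
  have hdet : IsUnit N.det := (Matrix.isUnit_iff_isUnit_det N).mp hN
  have hNinv : N⁻¹ * N = 1 := Matrix.nonsing_inv_mul N hdet
  have hNNinv : N * N⁻¹ = 1 := Matrix.mul_nonsing_inv N hdet
  -- (N⁻¹)ᵀ *ᵥ v = σ⁻¹ • u
  have hdetT : IsUnit Nᵀ.det := by rwa [Matrix.det_transpose]
  have hTinvv : (N⁻¹)ᵀ *ᵥ (v : Fin n → ℝ) = σ⁻¹ • (u : Fin n → ℝ) := by
    rw [Matrix.transpose_nonsing_inv]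
    have h1 : (Nᵀ)⁻¹ *ᵥ (Nᵀ *ᵥ (u : Fin n → ℝ)) = u := by
      rw [Matrix.mulVec_mulVec, Matrix.nonsing_inv_mul Nᵀ hdetT, Matrix.one_mulVec]
    rw [hNTu] at h1
    rw [Matrix.mulVec_smul] at h1
    rw [← h1, smul_smul, inv_mul_cancel₀ hσ', one_smul]
  have hvv : (v : Fin n → ℝ) ⬝ᵥ (v : Fin n → ℝ) = 1 := aux_dot_self v hv
  set d : ℝ := 1 / (3 * σ) with hd
  set Q : Matrix (Fin n) (Fin n) ℝ := vecMulVec (v : Fin n → ℝ) (u : Fin n → ℝ) with hQ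
  set W : Matrix (Fin n) (Fin n) ℝ := N⁻¹ - d • Q with hW
  set U : Matrix (Fin n) (Fin n) ℝ := vecMulVec (u : Fin n → ℝ) (u : Fin n → ℝ) with hU
  have e1 : N * Q = σ • U := by
    rw [hQ, aux_mul_vecMulVec N, hNv, aux_vecMulVec_smul_left, hU]
  have e2 : vecMulVec (u : Fin n → ℝ) (v : Fin n → ℝ) * N⁻¹ = σ⁻¹ • U := by
    rw [aux_vecMulVec_mul, hTinvv, aux_vecMulVec_smul_right, hU]
  have e3 : vecMulVec (u : Fin n → ℝ) (v : Fin n → ℝ) * Q = U := by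
    rw [hQ, aux_vecMulVec_mul_vecMulVec, hvv, one_smul, hU]
  have hMW : M * W = 1 := by
    rw [hM, hW]
    rw [add_mul, mul_sub, mul_sub, mul_smul_comm, e1, smul_mul_assoc, e2,
      smul_mul_assoc, mul_smul_comm, e3, hNNinv]
    rw [smul_smul, smul_smul, smul_smul]
    have h0 : σ / 2 * σ⁻¹ = d * σ + σ / 2 * d := by
      rw [hd]; field_simp; ring
    rw [h0, add_smul]
    abel
  have hMunit : IsUnit M :=
    (Matrix.isUnit_iff_isUnit_det M).mpr (Matrix.isUnit_det_of_right_inverse hMW)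
  refine ⟨hMunit, ?_⟩
  have hMinv : M⁻¹ = W := Matrix.inv_eq_right_inv hMW
  rw [hMinv, hW, sub_sub_cancel_left, norm_neg, norm_smul]
  rw [hQ, aux_norm_vecMulVec v u hv hu, mul_one]
  rw [hd]
  rw [Real.norm_eq_abs, abs_of_pos (by positivity)]
  field_simp
end

section
/- (Perturbation bound for the inverse capacitance matrix.) Let A be an invertible n×n real matrix, let U, V be n×k real matrices, and set λ = ‖U‖·‖V‖. Assume the capacitance matrix I + Vᵀ A⁻¹ U is invertible with ‖(I + Vᵀ A⁻¹ U)⁻¹‖ ≤ α. Let X be an n×n matrix with ‖X − A⁻¹‖ ≤ ε₁ where λ ε₁ < 1/(2α), and assume I + Vᵀ X U is invertible. Then ‖(I + Vᵀ X U)⁻¹ − (I + Vᵀ A⁻¹ U)⁻¹‖ ≤ 2 α² λ ε₁. -/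
open Matrix
open scoped Matrix.Norms.L2Operator

/-- Perturbation bound for the inverse capacitance matrix. -/
theorem smw_capacitance_perturbation {n k : ℕ}
    (A : Matrix (Fin n) (Fin n) ℝ) (hA : IsUnit A)
    (U V : Matrix (Fin n) (Fin k) ℝ) (lam : ℝ) (hlam : lam = ‖U‖ * ‖V‖)
    (α : ℝ) (hcap : IsUnit ((1 : Matrix (Fin k) (Fin k) ℝ) + Vᵀ * A⁻¹ * U))
    (hα : ‖((1 : Matrix (Fin k) (Fin k) ℝ) + Vᵀ * A⁻¹ * U)⁻¹‖ ≤ α)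
    (X : Matrix (Fin n) (Fin n) ℝ) (ε₁ : ℝ)
    (hX : ‖X - A⁻¹‖ ≤ ε₁) (hε₁ : lam * ε₁ < 1 / (2 * α))
    (hcapX : IsUnit ((1 : Matrix (Fin k) (Fin k) ℝ) + Vᵀ * X * U)) :
    ‖((1 : Matrix (Fin k) (Fin k) ℝ) + Vᵀ * X * U)⁻¹ -
        ((1 : Matrix (Fin k) (Fin k) ℝ) + Vᵀ * A⁻¹ * U)⁻¹‖ ≤ 2 * α ^ 2 * lam * ε₁ := by
  set B : Matrix (Fin k) (Fin k) ℝ := 1 + Vᵀ * A⁻¹ * U with hB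
  set C : Matrix (Fin k) (Fin k) ℝ := 1 + Vᵀ * X * U with hC
  have hα0 : 0 ≤ α := le_trans (norm_nonneg _) hα
  have hε0 : 0 ≤ ε₁ := le_trans (norm_nonneg _) hX
  have hlam0 : 0 ≤ lam := hlam ▸ mul_nonneg (norm_nonneg _) (norm_nonneg _)
  -- α > 0
  have hαpos : 0 < α := by
    rcases hα0.lt_or_eq with h | h
    · exact h
    · exfalso
      rw [← h] at hε₁
      simp at hε₁
      nlinarith [mul_nonneg hlam0 hε0]
  have hBdet := (Matrix.isUnit_iff_isUnit_det B).mp hcap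
  have hCdet := (Matrix.isUnit_iff_isUnit_det C).mp hcapX
  -- key identity : C⁻¹ - B⁻¹ = C⁻¹ * (B - C) * B⁻¹
  have key : C⁻¹ - B⁻¹ = C⁻¹ * (B - C) * B⁻¹ := by
    have h1 : C⁻¹ * (B - C) * B⁻¹ = C⁻¹ * (B * B⁻¹) - (C⁻¹ * C) * B⁻¹ := by
      noncomm_ring
    rw [h1, Matrix.mul_nonsing_inv B hBdet, Matrix.nonsing_inv_mul C hCdet,
      Matrix.mul_one, Matrix.one_mul]
  -- norm of B - C
  have hBC : ‖B - C‖ ≤ lam * ε₁ := by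
    have hBCeq : B - C = Vᵀ * (A⁻¹ - X) * U := by
      rw [hB, hC, Matrix.mul_sub, Matrix.sub_mul]; abel
    have hVt : ‖Vᵀ‖ = ‖V‖ := by
      rw [← Matrix.conjTranspose_eq_transpose_of_trivial]
      exact Matrix.l2_opNorm_conjTranspose V
    calc ‖B - C‖ = ‖Vᵀ * (A⁻¹ - X) * U‖ := by rw [hBCeq]
      _ ≤ ‖Vᵀ * (A⁻¹ - X)‖ * ‖U‖ := Matrix.l2_opNorm_mul _ _
      _ ≤ ‖Vᵀ‖ * ‖A⁻¹ - X‖ * ‖U‖ := by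
          have := Matrix.l2_opNorm_mul Vᵀ (A⁻¹ - X)
          exact mul_le_mul_of_nonneg_right this (norm_nonneg _)
      _ = ‖V‖ * ‖X - A⁻¹‖ * ‖U‖ := by rw [hVt, norm_sub_rev]
      _ ≤ ‖V‖ * ε₁ * ‖U‖ := by
          have := mul_le_mul_of_nonneg_left hX (norm_nonneg V)
          exact mul_le_mul_of_nonneg_right this (norm_nonneg _)
      _ = lam * ε₁ := by rw [hlam]; ring
  -- bound on ‖C⁻¹‖
  have hCinv : ‖C⁻¹‖ ≤ 2 * α := by
    have hsplit : ‖C⁻¹‖ ≤ ‖B⁻¹‖ + ‖C⁻¹ - B⁻¹‖ := by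
      calc ‖C⁻¹‖ = ‖B⁻¹ + (C⁻¹ - B⁻¹)‖ := by congr 1; abel
        _ ≤ ‖B⁻¹‖ + ‖C⁻¹ - B⁻¹‖ := norm_add_le _ _
    have hprod : ‖C⁻¹ - B⁻¹‖ ≤ ‖C⁻¹‖ * (lam * ε₁) * α := by
      rw [key]
      calc ‖C⁻¹ * (B - C) * B⁻¹‖ ≤ ‖C⁻¹ * (B - C)‖ * ‖B⁻¹‖ := Matrix.l2_opNorm_mul _ _
        _ ≤ ‖C⁻¹‖ * ‖B - C‖ * ‖B⁻¹‖ :=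
            mul_le_mul_of_nonneg_right (Matrix.l2_opNorm_mul _ _) (norm_nonneg _)
        _ ≤ ‖C⁻¹‖ * (lam * ε₁) * α := by
            have h1 : ‖C⁻¹‖ * ‖B - C‖ ≤ ‖C⁻¹‖ * (lam * ε₁) :=
              mul_le_mul_of_nonneg_left hBC (norm_nonneg _)
            exact mul_le_mul h1 hα (norm_nonneg _)
              (mul_nonneg (norm_nonneg _) (mul_nonneg hlam0 hε0))
    have hhalf : α * (lam * ε₁) < 1 / 2 := by
      have : lam * ε₁ < 1 / (2 * α) := hε₁
      rw [lt_div_iff₀ (by positivity : (0:ℝ) < 2 * α)] at this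
      nlinarith
    nlinarith [norm_nonneg (C⁻¹), norm_nonneg (B⁻¹ : Matrix (Fin k) (Fin k) ℝ),
      mul_nonneg hlam0 hε0]
  -- final bound
  rw [key]
  calc ‖C⁻¹ * (B - C) * B⁻¹‖ ≤ ‖C⁻¹‖ * ‖B - C‖ * ‖B⁻¹‖ := by
        refine le_trans (Matrix.l2_opNorm_mul _ _) ?_
        exact mul_le_mul_of_nonneg_right (Matrix.l2_opNorm_mul _ _) (norm_nonneg _)
    _ ≤ (2 * α) * (lam * ε₁) * α := by
        have h1 : ‖C⁻¹‖ * ‖B - C‖ ≤ (2 * α) * (lam * ε₁) :=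
          mul_le_mul hCinv hBC (norm_nonneg _) (by positivity)
        exact mul_le_mul h1 hα (norm_nonneg _) (by positivity)
    _ = 2 * α ^ 2 * lam * ε₁ := by ring
end

section
/- (Exact backward-error identity for the approximate SMW inverse.) Let X be an invertible n×n real matrix, U, V n×k real matrices, and W an invertible k×k real matrix such that W⁻¹ − Vᵀ X U is invertible. Then the matrix X − X U W Vᵀ X is invertible and (X − X U W Vᵀ X)⁻¹ − (X⁻¹ + U Vᵀ) = U [ (W⁻¹ − Vᵀ X U)⁻¹ − I ] Vᵀ. -/
open Matrix
open scoped Matrix.Norms.L2Operator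

/-- Exact backward-error identity for the approximate SMW inverse. -/
theorem smw_exact_backward_identity {n k : ℕ}
    (X : Matrix (Fin n) (Fin n) ℝ) (hX : IsUnit X)
    (U V : Matrix (Fin n) (Fin k) ℝ)
    (W : Matrix (Fin k) (Fin k) ℝ) (hW : IsUnit W)
    (hWinv : IsUnit (W⁻¹ - Vᵀ * X * U)) :
    IsUnit (X - X * U * W * Vᵀ * X) ∧
      (X - X * U * W * Vᵀ * X)⁻¹ - (X⁻¹ + U * Vᵀ) =
        U * ((W⁻¹ - Vᵀ * X * U)⁻¹ - 1) * Vᵀ := by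
  set S : Matrix (Fin k) (Fin k) ℝ := W⁻¹ - Vᵀ * X * U with hSdef
  have hX1 : X * X⁻¹ = 1 := mul_nonsing_inv X ((isUnit_iff_isUnit_det X).mp hX)
  have hW1 : W * W⁻¹ = 1 := mul_nonsing_inv W ((isUnit_iff_isUnit_det W).mp hW)
  have hS1 : S * S⁻¹ = 1 := mul_nonsing_inv S ((isUnit_iff_isUnit_det S).mp hWinv)
  -- key bracket identity: W * (VᵀXU) * S⁻¹ = S⁻¹ - W
  have hb : W * ((Vᵀ * X * U) * S⁻¹) = S⁻¹ - W := by
    have hVXU : Vᵀ * X * U = W⁻¹ - S := by rw [hSdef]; noncomm_ring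
    rw [hVXU, sub_mul, mul_sub, ← mul_assoc, hW1, one_mul, ← mul_assoc,
      mul_assoc W S S⁻¹, hS1, mul_one]
  have hMB : (X - X * U * W * Vᵀ * X) * (X⁻¹ + U * S⁻¹ * Vᵀ) = 1 := by
    have expand : (X - X * U * W * Vᵀ * X) * (X⁻¹ + U * S⁻¹ * Vᵀ) =
        X * X⁻¹ + X * U * S⁻¹ * Vᵀ - X * U * W * Vᵀ * (X * X⁻¹)
          - X * U * (W * ((Vᵀ * X * U) * S⁻¹)) * Vᵀ := by
      noncomm_ring
      simp only [Matrix.mul_assoc]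
    rw [expand, hX1, hb, mul_one]
    simp only [Matrix.mul_sub, Matrix.sub_mul]
    abel
  have hU : IsUnit (X - X * U * W * Vᵀ * X) := (Matrix.isUnit_iff_isUnit_det _).mpr (Matrix.isUnit_det_of_right_inverse hMB)
  refine ⟨hU, ?_⟩
  have hinv : (X - X * U * W * Vᵀ * X)⁻¹ = X⁻¹ + U * S⁻¹ * Vᵀ :=
    inv_eq_right_inv hMB
  rw [hinv]
  simp only [Matrix.mul_sub, Matrix.sub_mul, Matrix.mul_one]
  abel
end

section
/- (Intermediate bound in the backward error proof.) Let A be an invertible n×n real matrix, let U, V be n×k real matrices, set λ = ‖U‖·‖V‖, and assume ‖I + Vᵀ A⁻¹ U‖ ≤ β. Let X be an n×n matrix with ‖X − A⁻¹‖ ≤ ε₁, and assume I + Vᵀ X U is invertible. Let W be an invertible k×k matrix with ‖W − (I + Vᵀ X U)⁻¹‖ ≤ ε₂ such that W⁻¹ − Vᵀ X U is invertible, ε₂ < 1/(2(β + λ ε₁)), and 2(β + λ ε₁)² ε₂ < 1/2. Then ‖(W⁻¹ − Vᵀ X U)⁻¹ − I‖ ≤ 4 (β + λ ε₁)² ε₂.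 -/
open Matrix
open scoped Matrix.Norms.L2Operator

/-- If a unit square matrix has the form `1 - T` with `‖T‖ ≤ 1/2`, its inverse has
norm at most `2`. -/
lemma smw_aux_inv_norm_le {k : ℕ} (M T : Matrix (Fin k) (Fin k) ℝ)
    (hM : IsUnit M) (hMT : M = 1 - T) (hT : ‖T‖ ≤ 1 / 2) : ‖M⁻¹‖ ≤ 2 := by
  have h1 : M⁻¹ * M = 1 := Matrix.nonsing_inv_mul M (Matrix.isUnit_iff_isUnit_det M |>.mp hM)
  have h2 : M⁻¹ = 1 + M⁻¹ * T := by
    have : M⁻¹ * (M + T) = 1 + M⁻¹ * T := by rw [Matrix.mul_add, h1]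
    rw [← this, hMT]
    simp
  have h3 : ‖M⁻¹‖ ≤ 1 + ‖M⁻¹‖ * ‖T‖ := by
    calc ‖M⁻¹‖ = ‖(1 : Matrix (Fin k) (Fin k) ℝ) + M⁻¹ * T‖ := by rw [← h2]
    _ ≤ ‖(1 : Matrix (Fin k) (Fin k) ℝ)‖ + ‖M⁻¹ * T‖ := norm_add_le _ _
    _ ≤ 1 + ‖M⁻¹‖ * ‖T‖ := by
        gcongr
        · have h := Matrix.l2_opNorm_conjTranspose_mul_self (1 : Matrix (Fin k) (Fin k) ℝ)
          simp only [Matrix.conjTranspose_one, one_mul] at h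
          nlinarith [norm_nonneg (1 : Matrix (Fin k) (Fin k) ℝ)]
        · exact Matrix.l2_opNorm_mul _ _
  nlinarith [norm_nonneg (M⁻¹), norm_nonneg T]

/-- Intermediate bound in the backward error proof. -/
theorem smw_backward_intermediate_bound {n k : ℕ}
    (A : Matrix (Fin n) (Fin n) ℝ) (hA : IsUnit A)
    (U V : Matrix (Fin n) (Fin k) ℝ) (lam : ℝ) (hlam : lam = ‖U‖ * ‖V‖)
    (β : ℝ) (hβ : ‖(1 : Matrix (Fin k) (Fin k) ℝ) + Vᵀ * A⁻¹ * U‖ ≤ β)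
    (X : Matrix (Fin n) (Fin n) ℝ) (ε₁ ε₂ : ℝ) (hXA : ‖X - A⁻¹‖ ≤ ε₁)
    (hcapX : IsUnit ((1 : Matrix (Fin k) (Fin k) ℝ) + Vᵀ * X * U))
    (W : Matrix (Fin k) (Fin k) ℝ) (hW : IsUnit W)
    (hWcap : ‖W - ((1 : Matrix (Fin k) (Fin k) ℝ) + Vᵀ * X * U)⁻¹‖ ≤ ε₂)
    (hWinv : IsUnit (W⁻¹ - Vᵀ * X * U))
    (hε₂ : ε₂ < 1 / (2 * (β + lam * ε₁)))
    (hε₂' : 2 * (β + lam * ε₁) ^ 2 * ε₂ < 1 / 2) :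
    ‖(W⁻¹ - Vᵀ * X * U)⁻¹ - 1‖ ≤ 4 * (β + lam * ε₁) ^ 2 * ε₂ := by
  set b : ℝ := β + lam * ε₁ with hb_def
  set C : Matrix (Fin k) (Fin k) ℝ := 1 + Vᵀ * X * U with hC_def
  set E : Matrix (Fin k) (Fin k) ℝ := W - C⁻¹ with hE_def
  have hε₂0 : 0 ≤ ε₂ := le_trans (norm_nonneg _) hWcap
  -- positivity of b
  have hb : 0 < b := by
    by_contra h
    push_neg at h
    have : 1 / (2 * b) ≤ 0 := by
      rcases lt_or_eq_of_le h with h' | h'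
      · exact le_of_lt (div_neg_of_pos_of_neg one_pos (by linarith))
      · rw [h']; norm_num
    linarith
  have hbε₂ : b * ε₂ < 1 / 2 := by
    have := (lt_div_iff₀ (by linarith : (0:ℝ) < 2 * b)).mp hε₂
    nlinarith
  -- norm of C
  have hC : ‖C‖ ≤ b := by
    have hsplit : C = (1 + Vᵀ * A⁻¹ * U) + Vᵀ * (X - A⁻¹) * U := by
      rw [hC_def]
      rw [Matrix.mul_sub, Matrix.sub_mul]
      abel
    have hVt : ‖Vᵀ‖ = ‖V‖ := by
      rw [← Matrix.conjTranspose_eq_transpose_of_trivial]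
      exact Matrix.l2_opNorm_conjTranspose V
    have hmid : ‖Vᵀ * (X - A⁻¹) * U‖ ≤ lam * ε₁ := by
      calc ‖Vᵀ * (X - A⁻¹) * U‖ ≤ ‖Vᵀ * (X - A⁻¹)‖ * ‖U‖ := Matrix.l2_opNorm_mul _ _
      _ ≤ ‖Vᵀ‖ * ‖X - A⁻¹‖ * ‖U‖ := by
          gcongr
          exact Matrix.l2_opNorm_mul _ _
      _ ≤ lam * ε₁ := by
          rw [hVt, hlam]
          have h1 : 0 ≤ ‖X - A⁻¹‖ := norm_nonneg _
          nlinarith [mul_nonneg (mul_nonneg (norm_nonneg V) (norm_nonneg U))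
            (sub_nonneg.mpr hXA)]
    calc ‖C‖ ≤ ‖(1 : Matrix (Fin k) (Fin k) ℝ) + Vᵀ * A⁻¹ * U‖ + ‖Vᵀ * (X - A⁻¹) * U‖ := by
          rw [hsplit]; exact norm_add_le _ _
    _ ≤ β + lam * ε₁ := add_le_add hβ hmid
  -- basic algebra
  have hCdet : IsUnit C.det := (Matrix.isUnit_iff_isUnit_det C).mp hcapX
  have hWC : W * C = 1 + E * C := by
    have : W = C⁻¹ + E := by rw [hE_def]; abel
    rw [this, Matrix.add_mul, Matrix.nonsing_inv_mul C hCdet]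
  have hWCunit : IsUnit ((1 : Matrix (Fin k) (Fin k) ℝ) + E * C) := by
    rw [← hWC]; exact hW.mul hcapX
  set P : Matrix (Fin k) (Fin k) ℝ := (1 + E * C)⁻¹ with hP_def
  have hWinv_eq : W⁻¹ = C * P := by
    have h1 : (W * C)⁻¹ = C⁻¹ * W⁻¹ := Matrix.mul_inv_rev W C
    have h2 : C * (W * C)⁻¹ = W⁻¹ := by
      rw [h1, ← Matrix.mul_assoc, Matrix.mul_nonsing_inv C hCdet, Matrix.one_mul]
    rw [← h2, hWC]
  set D : Matrix (Fin k) (Fin k) ℝ := C * P * (E * C) with hD_def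
  have hM_eq : W⁻¹ - Vᵀ * X * U = 1 - D := by
    have hPP : C * P * (1 + E * C) = C := by
      rw [Matrix.mul_assoc, Matrix.nonsing_inv_mul _ ((Matrix.isUnit_iff_isUnit_det _).mp hWCunit), Matrix.mul_one]
    have hCD : C * P + D = C := by
      rw [Matrix.mul_add, Matrix.mul_one] at hPP
      exact hPP
    have hVXU : Vᵀ * X * U = C - 1 := by rw [hC_def]; abel
    have hCP : C * P = C - D := eq_sub_of_add_eq hCD
    rw [hWinv_eq, hVXU, hCP]; abel
  -- norm bounds
  have hE_norm : ‖E‖ ≤ ε₂ := hWcap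
  have hEC : ‖E * C‖ ≤ b * ε₂ := by
    calc ‖E * C‖ ≤ ‖E‖ * ‖C‖ := Matrix.l2_opNorm_mul _ _
    _ ≤ ε₂ * b := by gcongr
    _ = b * ε₂ := mul_comm _ _
  have hP_norm : ‖P‖ ≤ 2 := by
    apply smw_aux_inv_norm_le _ (-(E * C)) hWCunit (by abel)
    rw [norm_neg]
    exact le_trans hEC (le_of_lt hbε₂)
  have hD_norm : ‖D‖ ≤ 2 * b ^ 2 * ε₂ := by
    calc ‖D‖ ≤ ‖C * P‖ * ‖E * C‖ := Matrix.l2_opNorm_mul _ _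
    _ ≤ ‖C‖ * ‖P‖ * ‖E * C‖ := by
        gcongr
        exact Matrix.l2_opNorm_mul _ _
    _ ≤ b * 2 * (b * ε₂) := by gcongr
    _ = 2 * b ^ 2 * ε₂ := by ring
  set M : Matrix (Fin k) (Fin k) ℝ := W⁻¹ - Vᵀ * X * U with hM_def
  have hMdet : IsUnit M.det := (Matrix.isUnit_iff_isUnit_det M).mp hWinv
  have hM_norm : ‖M⁻¹‖ ≤ 2 :=
    smw_aux_inv_norm_le M D hWinv hM_eq (le_trans hD_norm hε₂'.le)
  have hfinal : M⁻¹ - 1 = M⁻¹ * D := by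
    have h1 : M⁻¹ * M = 1 := Matrix.nonsing_inv_mul M hMdet
    have h2 : M⁻¹ * (1 - D) = 1 := by rw [← hM_eq, h1]
    rw [Matrix.mul_sub, Matrix.mul_one] at h2
    rw [← h2]; abel
  calc ‖M⁻¹ - 1‖ = ‖M⁻¹ * D‖ := by rw [hfinal]
  _ ≤ ‖M⁻¹‖ * ‖D‖ := Matrix.l2_opNorm_mul _ _
  _ ≤ 2 * (2 * b ^ 2 * ε₂) := by gcongr
  _ = 4 * b ^ 2 * ε₂ := by ring
end
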